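/- arXiv:1310.0337 — 8 statements merged into one kernel-verified Lean document; each statement's English description precedes it below -/
import Mathlib

section
/- For positive integers r and s, gcd(2^r - 1, 2^s + 1) equals 1 if r/gcd(r,s) is odd, and equals 2^gcd(r,s) + 1 if r/gcd(r,s) is even. -/
-- If g divides 2^m - 1 and 2^n - 1 then g divides 2^(gcd m n) - 1.
lemma dvd_two_pow_gcd_sub_one {g m n : ℕ} (hm : g ∣ 2 ^ m - 1) (hn : g ∣ 2 ^ n - 1) :
    g ∣ 2 ^ Nat.gcd m n - 1 := by
  have key : ∀ k : ℕ, (g ∣ 2 ^ k - 1) ↔ (2 : ZMod g) ^ k = 1 := by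
    intro k
    have h1 : (1 : ℕ) ≤ 2 ^ k := Nat.one_le_two_pow
    constructor
    · intro h
      have h0 : ((2 ^ k - 1 : ℕ) : ZMod g) = 0 :=
        (ZMod.natCast_eq_zero_iff _ _).2 h
      have h2 : ((2 ^ k - 1 : ℕ) : ZMod g) = (2 : ZMod g) ^ k - 1 := by
        push_cast [Nat.cast_sub h1]
        ring
      rw [h2] at h0
      linear_combination h0
    · intro h
      have h2 : ((2 ^ k - 1 : ℕ) : ZMod g) = 0 := by
        push_cast [Nat.cast_sub h1]
        rw [h]; ring
      exact (ZMod.natCast_eq_zero_iff _ _).1 h2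
  rw [key] at hm hn ⊢
  have hdm : orderOf (2 : ZMod g) ∣ m := orderOf_dvd_of_pow_eq_one hm
  have hdn : orderOf (2 : ZMod g) ∣ n := orderOf_dvd_of_pow_eq_one hn
  exact orderOf_dvd_iff_pow_eq_one.1 (Nat.dvd_gcd hdm hdn)

lemma two_pow_sub_one_dvd {d k : ℕ} (h : d ∣ k) : 2 ^ d - 1 ∣ 2 ^ k - 1 := by
  obtain ⟨c, rfl⟩ := h
  rw [pow_mul]
  simpa using Nat.sub_dvd_pow_sub_pow (2 ^ d) 1 c

lemma two_pow_two_mul_sub_one (d : ℕ) : 2 ^ (2 * d) - 1 = (2 ^ d + 1) * (2 ^ d - 1) := by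
  rw [mul_comm 2 d, pow_mul, ← Nat.sq_sub_sq]

theorem gcd_two_pow_sub_one_add_one (r s : ℕ) (hr : 0 < r) (hs : 0 < s) :
    (Odd (r / Nat.gcd r s) → Nat.gcd (2 ^ r - 1) (2 ^ s + 1) = 1) ∧
    (Even (r / Nat.gcd r s) → Nat.gcd (2 ^ r - 1) (2 ^ s + 1) = 2 ^ Nat.gcd r s + 1) := by
  set d := Nat.gcd r s with hd
  have hdpos : 0 < d := Nat.gcd_pos_of_pos_left _ hr
  set a := r / d with ha
  set b := s / d with hb
  have hra : r = d * a := (Nat.mul_div_cancel' (Nat.gcd_dvd_left r s)).symm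
  have hsb : s = d * b := (Nat.mul_div_cancel' (Nat.gcd_dvd_right r s)).symm
  have hab : Nat.Coprime a b := Nat.coprime_div_gcd_div_gcd hdpos
  set g := Nat.gcd (2 ^ r - 1) (2 ^ s + 1) with hg
  have hg1 : g ∣ 2 ^ r - 1 := Nat.gcd_dvd_left _ _
  have hg2 : g ∣ 2 ^ s + 1 := Nat.gcd_dvd_right _ _
  have hgodd : ¬ 2 ∣ g := by
    intro h2
    have hdv : (2 : ℕ) ∣ 2 ^ r - 1 := h2.trans hg1
    have h1 : (1 : ℕ) ≤ 2 ^ r := Nat.one_le_two_pow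
    have h2r : (2 : ℕ) ∣ 2 ^ r := dvd_pow_self 2 hr.ne'
    omega
  have hg2s : g ∣ 2 ^ (2 * s) - 1 := by
    rw [two_pow_two_mul_sub_one]
    exact hg2.trans (Dvd.intro _ rfl)
  have hgkey : g ∣ 2 ^ Nat.gcd r (2 * s) - 1 := dvd_two_pow_gcd_sub_one hg1 hg2s
  have hgcd2s : Nat.gcd r (2 * s) = d * Nat.gcd a 2 := by
    rw [hra, hsb, ← mul_assoc, mul_comm 2 d, mul_assoc, Nat.gcd_mul_left]
    congr 1
    exact Nat.Coprime.gcd_mul_right_cancel_right 2 hab.symm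
  have h1s : (1 : ℕ) ≤ 2 ^ s := Nat.one_le_two_pow
  constructor
  · -- odd case
    intro hodd
    have h2a : Nat.gcd a 2 = 1 := Nat.coprime_two_right.2 hodd
    rw [hgcd2s, h2a, mul_one] at hgkey
    have hgs : g ∣ 2 ^ s - 1 := hgkey.trans (two_pow_sub_one_dvd (Nat.gcd_dvd_right r s))
    have hgdvd2 : g ∣ 2 := by
      have := Nat.dvd_sub hg2 hgs
      have heq : 2 ^ s + 1 - (2 ^ s - 1) = 2 := by omega
      rwa [heq] at this
    rcases (Nat.dvd_prime Nat.prime_two).1 hgdvd2 with h | h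
    · exact h
    · exact absurd (h ▸ dvd_refl g) hgodd
  · -- even case
    intro heven
    obtain ⟨c, hc⟩ := heven
    have hbodd : Odd b := by
      rcases Nat.even_or_odd b with hbe | hbo
      · exfalso
        have : (2 : ℕ) ∣ Nat.gcd a b := Nat.dvd_gcd ⟨c, by omega⟩ hbe.two_dvd
        rw [hab] at this
        omega
      · exact hbo
    have h2a : Nat.gcd a 2 = 2 := by
      rw [Nat.gcd_comm]
      exact Nat.gcd_eq_left ⟨c, by omega⟩
    rw [hgcd2s, h2a, mul_comm d 2, two_pow_two_mul_sub_one] at hgkey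
    -- 2^d + 1 divides g
    have hdvd1 : 2 ^ d + 1 ∣ 2 ^ s + 1 := by
      rw [hsb, pow_mul]
      simpa using Odd.nat_add_dvd_pow_add_pow (2 ^ d) 1 hbodd
    have hdvd2 : 2 ^ d + 1 ∣ 2 ^ r - 1 := by
      have h2dr : 2 * d ∣ r := ⟨c, by rw [hra, hc]; ring⟩
      exact dvd_trans (Dvd.intro _ rfl) ((two_pow_two_mul_sub_one d ▸ two_pow_sub_one_dvd h2dr))
    have hle : 2 ^ d + 1 ∣ g := Nat.dvd_gcd hdvd2 hdvd1
    -- g is coprime to 2^d - 1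
    have hco : Nat.Coprime g (2 ^ d - 1) := by
      set e := Nat.gcd g (2 ^ d - 1) with he
      have he1 : e ∣ 2 ^ s - 1 :=
        (Nat.gcd_dvd_right _ _).trans (two_pow_sub_one_dvd (Nat.gcd_dvd_right r s))
      have he2 : e ∣ 2 ^ s + 1 := (Nat.gcd_dvd_left _ _).trans hg2
      have hedvd2 : e ∣ 2 := by
        have := Nat.dvd_sub he2 he1
        have heq : 2 ^ s + 1 - (2 ^ s - 1) = 2 := by omega
        rwa [heq] at this
      have heodd : ¬ 2 ∣ e := fun h => hgodd (h.trans (Nat.gcd_dvd_left _ _))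
      rcases (Nat.dvd_prime Nat.prime_two).1 hedvd2 with h | h
      · exact h
      · exact absurd (h ▸ dvd_refl e) heodd
    have hge : g ∣ 2 ^ d + 1 := hco.dvd_of_dvd_mul_right hgkey
    exact Nat.dvd_antisymm hge hle
end

section
/- Let n = 2m, d a positive integer with gcd(d, 2^n - 1) = 1, and f(x) = x^d + Σ_{i=2}^t u_i x^{d_i} a polynomial over F_{2^n} with leading term x^d. Then f is a permutation of F_{2^n} if and only if for every nonzero δ ∈ F_{2^n}, the sum over x ∈ F_{2^n} of (-1)^(Tr(x^d + Σ_{i=2}^t u_i δ^(d - d_i) x^{d_i})) equals 0. -/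
section Aux

variable {F : Type*} [Field F] [Fintype F] [DecidableEq F]

/-- absolute trace as explicit sum of Frobenius powers -/
def trp (n : ℕ) (x : F) : F := ∑ j ∈ Finset.range n, x ^ 2 ^ j

/-- additive-character sign -/
def eps (s : F) : ℤ := if s = 0 then 1 else -1

variable {n : ℕ}

theorem trp_zero' : trp n (0 : F) = 0 := by
  simp [trp, zero_pow (by positivity : (2:ℕ) ^ _ ≠ 0)]

theorem trp_add [CharP F 2] (a b : F) : trp n (a + b) = trp n a + trp n b := by
  simp [trp, add_pow_char_pow, Finset.sum_add_distrib]

theorem trp_sq [CharP F 2] (hn : 0 < n) (hcard : Fintype.card F = 2 ^ n) (x : F) :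
    trp n x ^ 2 = trp n x := by
  have hx : x ^ 2 ^ n = x := by rw [← hcard]; exact FiniteField.pow_card x
  obtain ⟨k, rfl⟩ : ∃ k, n = k + 1 := ⟨n - 1, (Nat.succ_pred_eq_of_pos hn).symm⟩
  have h1 : trp (k+1) x ^ 2 = ∑ j ∈ Finset.range (k+1), x ^ 2 ^ (j+1) := by
    rw [trp, sum_pow_char]
    refine Finset.sum_congr rfl fun j _ => ?_
    rw [← pow_mul, pow_succ]
  rw [h1, Finset.sum_range_succ, hx, trp, Finset.sum_range_succ']
  simp [add_comm]

theorem trp_mem [CharP F 2] (hn : 0 < n) (hcard : Fintype.card F = 2 ^ n) (x : F) :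
    trp n x = 0 ∨ trp n x = 1 := by
  have h : trp n x * (trp n x - 1) = 0 := by
    linear_combination trp_sq hn hcard x
  rcases mul_eq_zero.mp h with h | h
  · exact Or.inl h
  · exact Or.inr (by linear_combination h)

theorem eps_zero : eps (0 : F) = 1 := if_pos rfl

theorem eps_add [CharP F 2] {s t : F} (hs : s = 0 ∨ s = 1) (ht : t = 0 ∨ t = 1) :
    eps (s + t) = eps s * eps t := by
  have h2 : (1 : F) + 1 = 0 := CharTwo.add_self_eq_zero 1
  rcases hs with rfl | rfl <;> rcases ht with rfl | rfl <;>
    simp [eps, h2, one_ne_zero]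

theorem exists_trp_ne_zero [CharP F 2] (hn : 0 < n) (hcard : Fintype.card F = 2 ^ n) :
    ∃ x : F, trp n x ≠ 0 := by
  by_contra h
  push_neg at h
  set P : Polynomial F := ∑ j ∈ Finset.range n, Polynomial.X ^ 2 ^ j with hP
  have heval : ∀ x : F, P.eval x = trp n x := by
    intro x; simp [hP, trp, Polynomial.eval_finset_sum]
  have hPne : P ≠ 0 := by
    intro h0
    have hc : P.coeff 1 = 1 := by
      rw [hP, Polynomial.finset_sum_coeff]
      rw [Finset.sum_eq_single 0]
      · simp
      · intro j hj hj0
        rw [Polynomial.coeff_X_pow]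
        have h1 : (2:ℕ) ^ j ≠ 1 := Nat.ne_of_gt (Nat.one_lt_two_pow hj0)
        simp [Ne.symm h1]
      · intro h0'; exact absurd (Finset.mem_range.mpr hn) h0'
    rw [h0] at hc; simp at hc
  have hdeg : P.natDegree ≤ 2 ^ (n - 1) := by
    apply Polynomial.natDegree_sum_le_of_forall_le
    intro j hj
    rw [Polynomial.natDegree_X_pow]
    exact Nat.pow_le_pow_right (by norm_num) (Nat.le_pred_of_lt (Finset.mem_range.mp hj))
  have hsub : (Finset.univ : Finset F).val ⊆ P.roots := by
    intro x hx
    rw [Polynomial.mem_roots hPne]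
    exact (heval x).trans (h x)
  have hle := (Polynomial.card_le_degree_of_subset_roots hsub).trans hdeg
  rw [Finset.card_univ, hcard] at hle
  have hlt : 2 ^ (n - 1) < 2 ^ n := Nat.pow_lt_pow_right (by norm_num) (Nat.pred_lt hn.ne')
  omega

theorem sum_eps_trp_ne [CharP F 2] (hn : 0 < n) (hcard : Fintype.card F = 2 ^ n)
    {a : F} (ha : a ≠ 0) : ∑ γ : F, eps (trp n (γ * a)) = 0 := by
  obtain ⟨c, hc⟩ := exists_trp_ne_zero hn hcard (F := F)
  have hc1 : trp n c = 1 := (trp_mem hn hcard c).resolve_left hc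
  set b : F := c * a⁻¹ with hb
  have hba : b * a = c := by
    rw [hb, mul_assoc, inv_mul_cancel₀ ha, mul_one]
  have key : ∀ γ : F, eps (trp n ((γ + b) * a)) = - eps (trp n (γ * a)) := by
    intro γ
    rw [add_mul, trp_add, hba, hc1]
    rcases trp_mem hn hcard (γ * a) with h | h <;>
      · rw [h]; simp [eps, one_ne_zero, CharTwo.add_self_eq_zero (1:F)]
  have hre : ∑ γ : F, eps (trp n ((γ + b) * a)) = ∑ γ : F, eps (trp n (γ * a)) :=
    Fintype.sum_equiv (Equiv.addRight b) _ _ (fun γ => rfl)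
  have hneg : ∑ γ : F, eps (trp n ((γ + b) * a)) = - ∑ γ : F, eps (trp n (γ * a)) := by
    rw [← Finset.sum_neg_distrib]
    exact Finset.sum_congr rfl fun γ _ => key γ
  omega

theorem sum_eps_trp [CharP F 2] (hn : 0 < n) (hcard : Fintype.card F = 2 ^ n)
    (a : F) : ∑ γ : F, eps (trp n (γ * a)) = if a = 0 then (Fintype.card F : ℤ) else 0 := by
  rcases eq_or_ne a 0 with rfl | ha
  · simp [trp_zero', eps]
  · rw [if_neg ha]; exact sum_eps_trp_ne hn hcard ha

theorem bijective_iff_sums [CharP F 2] (hn : 0 < n) (hcard : Fintype.card F = 2 ^ n)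
    (f : F → F) :
    Function.Bijective f ↔ ∀ γ : F, γ ≠ 0 → ∑ x : F, eps (trp n (γ * f x)) = 0 := by
  constructor
  · intro hf γ hγ
    have h1 : ∑ x : F, eps (trp n (γ * f x)) = ∑ y : F, eps (trp n (γ * y)) :=
      Fintype.sum_bijective f hf _ _ (fun x => rfl)
    have h2 : ∑ y : F, eps (trp n (γ * y)) = ∑ y : F, eps (trp n (y * γ)) := by
      simp [mul_comm]
    rw [h1, h2]
    exact sum_eps_trp_ne hn hcard hγ
  · intro h
    apply Finite.surjective_iff_bijective.mp
    intro y
    have T1 : ∑ x : F, ∑ γ : F, eps (trp n (γ * (f x + y)))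
        = ((Finset.univ.filter (fun x : F => f x = y)).card : ℤ) * Fintype.card F := by
      rw [Finset.sum_congr rfl (fun x _ => sum_eps_trp hn hcard (f x + y))]
      have hiff : ∀ x : F, f x + y = 0 ↔ f x = y := by
        intro x; rw [← CharTwo.sub_eq_add, sub_eq_zero]
      rw [Finset.sum_congr rfl (fun x _ => by rw [if_congr (hiff x) rfl rfl])]
      rw [← Finset.sum_filter, Finset.sum_const, nsmul_eq_mul]
    have T2 : ∑ x : F, ∑ γ : F, eps (trp n (γ * (f x + y)))
        = (Fintype.card F : ℤ) := by
      rw [Finset.sum_comm]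
      have hterm : ∀ γ : F, ∑ x : F, eps (trp n (γ * (f x + y)))
          = (∑ x : F, eps (trp n (γ * f x))) * eps (trp n (γ * y)) := by
        intro γ
        rw [Finset.sum_mul]
        refine Finset.sum_congr rfl fun x _ => ?_
        rw [mul_add, trp_add]
        exact eps_add (trp_mem hn hcard _) (trp_mem hn hcard _)
      rw [Finset.sum_congr rfl (fun γ _ => hterm γ)]
      rw [Finset.sum_eq_single 0]
      · simp [trp_zero', eps]
      · intro γ _ hγ; rw [h γ hγ, zero_mul]
      · simp
    have hq : (Fintype.card F : ℤ) ≠ 0 := by positivity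
    have hcount : ((Finset.univ.filter (fun x : F => f x = y)).card : ℤ) = 1 := by
      have h12 := T1.symm.trans T2
      have := mul_right_cancel₀ hq (h12.trans (one_mul (Fintype.card F : ℤ)).symm)
      exact this
    have hcard1 : (Finset.univ.filter (fun x : F => f x = y)).card = 1 := by
      exact_mod_cast hcount
    obtain ⟨a, ha⟩ := Finset.card_eq_one.mp hcard1
    refine ⟨a, ?_⟩
    have : a ∈ Finset.univ.filter (fun x : F => f x = y) := ha ▸ Finset.mem_singleton_self a
    exact (Finset.mem_filter.mp this).2

theorem exists_pow_eq_of_gcd {d : ℕ}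
    (hgcd : Nat.gcd d (Fintype.card F - 1) = 1) {γ : F} (hγ : γ ≠ 0) :
    ∃ δ : F, δ ≠ 0 ∧ δ ^ d = γ := by
  have hcop : (Nat.card Fˣ).Coprime d := by
    rw [Nat.card_eq_fintype_card, Fintype.card_units]
    exact Nat.Coprime.symm hgcd
  obtain ⟨δu, hδu⟩ := (powCoprime hcop).surjective (Units.mk0 γ hγ)
  refine ⟨(δu : F), Units.ne_zero δu, ?_⟩
  have : ((δu ^ d : Fˣ) : F) = γ := by
    rw [show δu ^ d = powCoprime hcop δu from rfl, hδu]; rfl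
  rwa [Units.val_pow_eq_pow_val] at this

end Aux

/-- Criterion for `f(x) = x^d + ∑_{i} u_i x^{d_i}` (with `gcd(d, 2^n - 1) = 1`) to be a
permutation of `𝔽_{2^n}`, `n = 2m`: `f` is bijective iff for every nonzero `δ` the character
sum `∑_x (-1)^{Tr(x^d + ∑_i u_i δ^{d - d_i} x^{d_i})}` vanishes. Here `Tr` is the absolute
trace `x ↦ ∑_{j<n} x^{2^j}` and `δ^{d - d_i}` is an integer power (negative via inverses). -/
theorem permutation_iff_char_sums_vanish_of_form (n m : ℕ) (hm : 0 < m) (hn : n = 2 * m)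
    (F : Type*) [Field F] [Fintype F] [DecidableEq F] (hcard : Fintype.card F = 2 ^ n)
    (ι : Type*) [Fintype ι] (u : ι → F) (d : ℕ) (hd : 0 < d) (dd : ι → ℕ)
    (hdd : ∀ i, 0 < dd i) (hgcd : Nat.gcd d (2 ^ n - 1) = 1) :
    Function.Bijective (fun x : F => x ^ d + ∑ i, u i * x ^ dd i) ↔
      ∀ δ : F, δ ≠ 0 →
        ∑ x : F,
          (if (∑ j ∈ Finset.range n,
              (x ^ d + ∑ i, u i * δ ^ ((d : ℤ) - (dd i : ℤ)) * x ^ dd i) ^ 2 ^ j) = 0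
            then (1 : ℤ) else -1) = 0 := by
  have hn0 : 0 < n := by omega
  -- characteristic 2
  haveI hchar : CharP F 2 := by
    haveI := ringChar.charP F
    have hp : (ringChar F).Prime := CharP.char_is_prime F (ringChar F)
    obtain ⟨k, _, hk⟩ := FiniteField.card F (ringChar F)
    have hdvd : ringChar F ∣ 2 ^ n := by
      rw [← hcard, hk]
      exact dvd_pow_self _ (by exact_mod_cast k.ne_zero)
    have h2 : ringChar F = 2 :=
      (Nat.prime_dvd_prime_iff_eq hp Nat.prime_two).mp (hp.dvd_of_dvd_pow hdvd)
    rwa [h2] at this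
  set f : F → F := fun x => x ^ d + ∑ i, u i * x ^ dd i with hf
  -- the character sums in the statement, rewritten
  have hstmt : ∀ δ : F,
      (∑ x : F,
        (if (∑ j ∈ Finset.range n,
            (x ^ d + ∑ i, u i * δ ^ ((d : ℤ) - (dd i : ℤ)) * x ^ dd i) ^ 2 ^ j) = 0
          then (1 : ℤ) else -1))
      = ∑ x : F, eps (trp n (x ^ d + ∑ i, u i * δ ^ ((d : ℤ) - (dd i : ℤ)) * x ^ dd i)) := by
    intro δ; rfl
  -- substitution x ↦ δ x
  have key : ∀ δ : F, δ ≠ 0 →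
      ∑ x : F, eps (trp n (x ^ d + ∑ i, u i * δ ^ ((d : ℤ) - (dd i : ℤ)) * x ^ dd i))
      = ∑ x : F, eps (trp n (δ ^ d * f x)) := by
    intro δ hδ
    have hz : ∀ i, δ ^ ((d:ℤ) - (dd i:ℤ)) * δ ^ (dd i) = δ ^ d := by
      intro i
      rw [← zpow_natCast δ (dd i), ← zpow_add₀ hδ, sub_add_cancel, zpow_natCast]
    have hpoint : ∀ x : F, δ ^ d * f x
        = (δ * x) ^ d + ∑ i, u i * δ ^ ((d:ℤ) - (dd i:ℤ)) * (δ * x) ^ dd i := by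
      intro x
      rw [hf]
      simp only [mul_add, mul_pow, Finset.mul_sum]
      congr 1
      refine Finset.sum_congr rfl fun i _ => ?_
      calc δ ^ d * (u i * x ^ dd i)
          = u i * (δ ^ ((d:ℤ) - (dd i:ℤ)) * δ ^ (dd i)) * x ^ dd i := by rw [hz i]; ring
        _ = u i * δ ^ ((d:ℤ) - (dd i:ℤ)) * (δ ^ dd i * x ^ dd i) := by ring
    exact (Fintype.sum_bijective (fun x : F => δ * x)
      (mulLeft_bijective₀ δ hδ) _ _ (fun x => by rw [hpoint x])).symm
  rw [bijective_iff_sums hn0 hcard f]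
  constructor
  · intro hS δ hδ
    rw [hstmt δ, key δ hδ]
    exact hS (δ ^ d) (pow_ne_zero d hδ)
  · intro hT γ hγ
    have hgcd' : Nat.gcd d (Fintype.card F - 1) = 1 := by rw [hcard]; exact hgcd
    obtain ⟨δ, hδ, rfl⟩ := exists_pow_eq_of_gcd hgcd' hγ
    rw [← key δ hδ, ← hstmt δ]
    exact hT δ hδ
end

section
/- Let n = 2m, s, l, e positive integers, d_1 = s(2^m - 1) + e, d_2 = (s - l)(2^m - 1) + e with gcd(d_1, 2^n - 1) = 1. Suppose r := gcd(l, 2^m + 1) > 1, gcd(e + l - 2s, 2^m + 1) = 1, and u belongs to U \ U^r, where U = {λ ∈ F_{2^n} : λ^(2^m+1) = 1} and U^r = {v^r : v ∈ U}. Then the map x ↦ x^{d_1} + u x^{d_2} is a bijection of F_{2^n}. -/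
private lemma int_gcd_add_mul (a b s : ℤ) : Int.gcd (a + s * b) b = Int.gcd a b := by
  apply Nat.dvd_antisymm
  · apply Int.natCast_dvd_natCast.mp
    apply Int.dvd_coe_gcd
    · have h1 := Int.gcd_dvd_left (a := a + s * b) (b := b)
      have h2 := Int.gcd_dvd_right (a := a + s * b) (b := b)
      have : (Int.gcd (a + s * b) b : ℤ) ∣ (a + s * b) - s * b := dvd_sub h1 (h2.mul_left s)
      simpa using this
    · exact Int.gcd_dvd_right _ _
  · apply Int.natCast_dvd_natCast.mp
    apply Int.dvd_coe_gcd
    · exact dvd_add (Int.gcd_dvd_left _ _) ((Int.gcd_dvd_right _ _).mul_left s)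
    · exact Int.gcd_dvd_right _ _

private lemma pow_eq_pow_inj {F : Type*} [Field F] {a b : F} {t1 t2 : ℕ}
    (h1 : a ^ t1 = b ^ t1) (h2 : a ^ t2 = b ^ t2) (hg : Nat.gcd t1 t2 = 1)
    (hb : b ≠ 0) : a = b := by
  have hb1 : b ^ t1 ≠ 0 := pow_ne_zero _ hb
  have hb2 : b ^ t2 ≠ 0 := pow_ne_zero _ hb
  have hw1 : (a / b) ^ t1 = 1 := by rw [div_pow, h1, div_self hb1]
  have hw2 : (a / b) ^ t2 = 1 := by rw [div_pow, h2, div_self hb2]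
  have ho : orderOf (a / b) ∣ Nat.gcd t1 t2 :=
    Nat.dvd_gcd (orderOf_dvd_of_pow_eq_one hw1) (orderOf_dvd_of_pow_eq_one hw2)
  rw [hg, Nat.dvd_one, orderOf_eq_one_iff] at ho
  field_simp at ho
  exact ho

/-- Main theorem: with `n = 2m`, `d₁ = s(2^m-1)+e`, `d₂ = (s-l)(2^m-1)+e`, `gcd(d₁,2^n-1)=1`,
`r = gcd(l, 2^m+1) > 1`, `gcd(e+l-2s, 2^m+1) = 1`, and `u ∈ U \ U^r` (where
`U = {λ : λ^(2^m+1)=1}`), the binomial `x^{d₁} + u x^{d₂}` permutes `𝔽_{2^n}`. -/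
theorem binomial_permutation (n m s l e : ℕ) (hm : 0 < m) (hn : n = 2 * m)
    (hs : 0 < s) (hl : 0 < l) (he : 0 < e) (hls : l ≤ s)
    (F : Type*) [Field F] [Fintype F] (hcard : Fintype.card F = 2 ^ n)
    (d₁ d₂ : ℕ) (hd₁ : d₁ = s * (2 ^ m - 1) + e) (hd₂ : d₂ = (s - l) * (2 ^ m - 1) + e)
    (hgcd : Nat.gcd d₁ (2 ^ n - 1) = 1)
    (hr : 1 < Nat.gcd l (2 ^ m + 1))
    (hgcd2 : Int.gcd ((e : ℤ) + (l : ℤ) - 2 * (s : ℤ)) ((2 : ℤ) ^ m + 1) = 1)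
    (u : F) (hu : u ^ (2 ^ m + 1) = 1)
    (hu2 : ¬ ∃ v : F, v ^ (2 ^ m + 1) = 1 ∧ u = v ^ Nat.gcd l (2 ^ m + 1)) :
    Function.Bijective (fun x : F => x ^ d₁ + u * x ^ d₂) := by
  -- characteristic 2
  have hp2 : CharP F 2 := by
    obtain ⟨p, hc⟩ := CharP.exists F
    haveI := hc
    obtain ⟨k, hp, hk⟩ := FiniteField.card F p
    have hpeq : p = 2 := by
      have hpd : p ∣ 2 ^ n := by
        rw [← hcard, hk]
        exact dvd_pow_self p k.2.ne'
      have := hp.dvd_of_dvd_pow hpd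
      exact (Nat.prime_dvd_prime_iff_eq hp Nat.prime_two).mp this
    subst hpeq; exact hc
  haveI := hp2
  haveI : Fact (Nat.Prime 2) := ⟨Nat.prime_two⟩
  have h1M : (1 : ℕ) ≤ 2 ^ m := Nat.one_le_two_pow
  have hMM : (2 ^ m - 1) * (2 ^ m + 1) = 2 ^ n - 1 := by
    have h2n : 2 ^ n = 2 ^ m * 2 ^ m := by rw [hn, two_mul, pow_add]
    obtain ⟨M', hM'⟩ : ∃ M', 2 ^ m = M' + 1 := ⟨2 ^ m - 1, by omega⟩
    rw [h2n, hM']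
    simp only [Nat.add_sub_cancel]
    have : (M' + 1) * (M' + 1) = M' * (M' + 1 + 1) + 1 := by ring
    omega
  have hqx : ∀ x : F, x ≠ 0 → x ^ (2 ^ n - 1) = 1 := fun x hx => by
    rw [← hcard]; exact FiniteField.pow_card_sub_one_eq_one x hx
  have hu0 : u ≠ 0 := by
    intro h; rw [h, zero_pow (by positivity)] at hu; exact zero_ne_one hu
  have huM : u ^ 2 ^ m * u = 1 := by rw [← pow_succ]; exact hu
  -- the unit circle elements to the l never hit u
  have hUne : ∀ ζ : F, ζ ^ (2 ^ m + 1) = 1 → ζ ^ l + u ≠ 0 := by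
    intro ζ hζ hcon
    have hζl : ζ ^ l = u := by
      have := eq_neg_of_add_eq_zero_left hcon
      rwa [CharTwo.neg_eq] at this
    apply hu2
    refine ⟨ζ ^ (l / Nat.gcd l (2 ^ m + 1)), ?_, ?_⟩
    · rw [← pow_mul, mul_comm, pow_mul, hζ, one_pow]
    · rw [← pow_mul, Nat.div_mul_cancel (Nat.gcd_dvd_left _ _), hζl]
  -- exponent relations
  have hd : d₁ = d₂ + l * (2 ^ m - 1) := by
    obtain ⟨t, rfl⟩ : ∃ t, s = t + l := ⟨s - l, by omega⟩
    rw [hd₁, hd₂]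
    simp only [Nat.add_sub_cancel]
    ring
  have hd₂pos : 0 < d₂ := by rw [hd₂]; omega
  have hd₁pos : 0 < d₁ := by omega
  have hco1 : Nat.gcd d₂ (2 ^ m - 1) = 1 := by
    have h1 : Nat.gcd d₂ (2 ^ m - 1) ∣ d₁ := by
      rw [hd]; exact dvd_add (Nat.gcd_dvd_left _ _) ((Nat.gcd_dvd_right _ _).mul_left l)
    have h2 : Nat.gcd d₂ (2 ^ m - 1) ∣ 2 ^ n - 1 := by
      rw [← hMM]; exact (Nat.gcd_dvd_right _ _).mul_right _
    have := Nat.dvd_gcd h1 h2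
    rw [hgcd] at this
    exact Nat.dvd_one.mp this
  have hco2 : Nat.gcd (d₂ + 2 ^ m * l) (2 ^ m + 1) = 1 := by
    have hcast : ((d₂ + 2 ^ m * l : ℕ) : ℤ) =
        ((e : ℤ) + l - 2 * s) + (s : ℤ) * ((2 : ℤ) ^ m + 1) := by
      have h1 : ((s - l : ℕ) : ℤ) = (s : ℤ) - l := Nat.cast_sub hls
      have h2 : ((2 ^ m - 1 : ℕ) : ℤ) = (2 : ℤ) ^ m - 1 := by
        push_cast [Nat.cast_sub h1M]; ring
      rw [hd₂]
      push_cast [h1, h2]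
      ring
    have hZ : Int.gcd ((d₂ + 2 ^ m * l : ℕ) : ℤ) ((2 : ℤ) ^ m + 1) = 1 := by
      rw [hcast, int_gcd_add_mul]; exact hgcd2
    rwa [show ((2 : ℤ) ^ m + 1) = ((2 ^ m + 1 : ℕ) : ℤ) by push_cast; ring,
      Int.gcd_natCast_natCast] at hZ
  -- basic facts
  have hAeq : ∀ x : F, x ^ d₁ + u * x ^ d₂ = x ^ d₂ * ((x ^ (2 ^ m - 1)) ^ l + u) := by
    intro x
    rw [hd, pow_add, mul_comm l, pow_mul]
    ring
  have hUx : ∀ x : F, x ≠ 0 → (x ^ (2 ^ m - 1)) ^ (2 ^ m + 1) = 1 := fun x hx => by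
    rw [← pow_mul, hMM]; exact hqx x hx
  have hfzero : ∀ x : F, x ^ d₁ + u * x ^ d₂ = 0 → x = 0 := by
    intro x hxf
    by_contra hx
    rw [hAeq x] at hxf
    rcases mul_eq_zero.mp hxf with h | h
    · exact hx (pow_eq_zero_iff hd₂pos.ne' |>.mp h)
    · exact hUne _ (hUx x hx) h
  -- the key Frobenius identity
  have key : ∀ x : F, x ≠ 0 →
      u * (x ^ (2 ^ m - 1)) ^ l * (x ^ d₁ + u * x ^ d₂) ^ 2 ^ m
        = (x ^ d₁ + u * x ^ d₂) * (x ^ (2 ^ m - 1)) ^ d₂ := by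
    intro x hx
    set ξ := x ^ (2 ^ m - 1) with hξ
    have hξN : ξ ^ (2 ^ m + 1) = 1 := hUx x hx
    have hfrob : (ξ ^ l + u) ^ 2 ^ m = (ξ ^ l) ^ 2 ^ m + u ^ 2 ^ m :=
      add_pow_char_pow (ξ ^ l) u 2 m
    have hξlN : (ξ ^ l) ^ 2 ^ m * ξ ^ l = 1 := by
      rw [← pow_succ, ← pow_mul, mul_comm, pow_mul, hξN, one_pow]
    have hxd : (x ^ d₂) ^ 2 ^ m = x ^ d₂ * ξ ^ d₂ := by
      rw [hξ, ← pow_mul, ← pow_mul, ← pow_add]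
      congr 1
      obtain ⟨M', hM'⟩ : ∃ M', 2 ^ m = M' + 1 := ⟨2 ^ m - 1, by omega⟩
      rw [hM']
      simp only [Nat.add_sub_cancel]
      ring
    rw [hAeq x, mul_pow, hxd, hfrob]
    linear_combination (u * x ^ d₂ * ξ ^ d₂) * hξlN + (ξ ^ l * x ^ d₂ * ξ ^ d₂) * huM
  -- injectivity implies bijectivity
  apply Finite.injective_iff_bijective.mp
  intro x y hxy
  simp only at hxy
  by_cases hx : x = 0
  · subst hx
    rw [zero_pow hd₁pos.ne', zero_pow hd₂pos.ne', mul_zero, add_zero] at hxy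
    exact (hfzero y hxy.symm).symm
  by_cases hy : y = 0
  · subst hy
    rw [zero_pow hd₁pos.ne', zero_pow hd₂pos.ne', mul_zero, add_zero] at hxy
    exact absurd (hfzero x hxy) hx
  have k1 := key x hx
  have k2 := key y hy
  rw [← hxy] at k2
  set ξ := x ^ (2 ^ m - 1) with hξ
  set η := y ^ (2 ^ m - 1) with hη
  set c := x ^ d₁ + u * x ^ d₂ with hcdef
  have hc0 : c ≠ 0 := fun h => hx (hfzero x h)
  have hcM : c ^ 2 ^ m ≠ 0 := pow_ne_zero _ hc0
  have hξN : ξ ^ (2 ^ m + 1) = 1 := hUx x hx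
  have hηN : η ^ (2 ^ m + 1) = 1 := hUx y hy
  have hcross : ξ ^ l * η ^ d₂ = η ^ l * ξ ^ d₂ := by
    have e1 : u * ξ ^ l * c ^ 2 ^ m * η ^ d₂ = c * ξ ^ d₂ * η ^ d₂ := by rw [k1]
    have e2 : u * η ^ l * c ^ 2 ^ m * ξ ^ d₂ = c * η ^ d₂ * ξ ^ d₂ := by rw [k2]
    have h3 : (u * c ^ 2 ^ m) * (ξ ^ l * η ^ d₂) = (u * c ^ 2 ^ m) * (η ^ l * ξ ^ d₂) := by
      linear_combination e1 - e2
    exact mul_left_cancel₀ (mul_ne_zero hu0 hcM) h3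
  have hξl1 : ξ ^ (2 ^ m * l) * ξ ^ l = 1 := by
    rw [← pow_add, show 2 ^ m * l + l = (2 ^ m + 1) * l by ring, pow_mul, hξN, one_pow]
  have hηl1 : η ^ (2 ^ m * l) * η ^ l = 1 := by
    rw [← pow_add, show 2 ^ m * l + l = (2 ^ m + 1) * l by ring, pow_mul, hηN, one_pow]
  have hk : ξ ^ (d₂ + 2 ^ m * l) = η ^ (d₂ + 2 ^ m * l) := by
    have h4 : (ξ ^ (2 ^ m * l) * ξ ^ l) * (η ^ d₂ * η ^ (2 ^ m * l))
        = (η ^ (2 ^ m * l) * η ^ l) * (ξ ^ d₂ * ξ ^ (2 ^ m * l)) := by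
      linear_combination (ξ ^ (2 ^ m * l) * η ^ (2 ^ m * l)) * hcross
    rw [hξl1, hηl1, one_mul, one_mul, ← pow_add, ← pow_add] at h4
    exact h4.symm
  have hη0 : η ≠ 0 := pow_ne_zero _ hy
  have hξη : ξ = η := pow_eq_pow_inj hk (by rw [hξN, hηN]) hco2 hη0
  have hxy2 : x ^ d₂ = y ^ d₂ := by
    have h5 : x ^ d₂ * (ξ ^ l + u) = y ^ d₂ * (ξ ^ l + u) := by
      have h6 : x ^ d₂ * (ξ ^ l + u) = y ^ d₂ * (η ^ l + u) := by
        rw [hξ, hη, ← hAeq x, ← hAeq y]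
        exact hxy
      rwa [← hξη] at h6
    exact mul_right_cancel₀ (hUne ξ hξN) h5
  exact pow_eq_pow_inj hxy2 hξη hco1 hy
end

section
/- Let n = 2m, s a positive integer, d = s(2^m - 1) + 1 with gcd(d, 2^n - 1) = 1. Suppose r := gcd(s, 2^m + 1) > 1 and gcd(s - 1, 2^m + 1) = 1. Then for every u ∈ U \ U^r, the map x ↦ x^d + u·x is a bijection of F_{2^n}, where U is the unit circle {λ : λ^(2^m+1) = 1} and U^r = {v^r : v ∈ U}. -/
/-- With `n = 2m`, `d = s(2^m-1)+1`, `gcd(d, 2^n-1) = 1`, `r = gcd(s, 2^m+1) > 1` and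
`gcd(s-1, 2^m+1) = 1`, for every `u ∈ U \ U^r` the binomial `x^d + u x` permutes `𝔽_{2^n}`. -/
theorem binomial_permutation_niho (n m s : ℕ) (hm : 0 < m) (hn : n = 2 * m) (hs : 0 < s)
    (F : Type*) [Field F] [Fintype F] (hcard : Fintype.card F = 2 ^ n)
    (d : ℕ) (hd : d = s * (2 ^ m - 1) + 1)
    (hgcd : Nat.gcd d (2 ^ n - 1) = 1)
    (hr : 1 < Nat.gcd s (2 ^ m + 1))
    (hgcd2 : Nat.gcd (s - 1) (2 ^ m + 1) = 1)
    (u : F) (hu : u ^ (2 ^ m + 1) = 1)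
    (hu2 : ¬ ∃ v : F, v ^ (2 ^ m + 1) = 1 ∧ u = v ^ Nat.gcd s (2 ^ m + 1)) :
    Function.Bijective (fun x : F => x ^ d + u * x) := by
  set q := 2 ^ m with hqdef
  have hq1 : 1 ≤ q := Nat.one_le_two_pow
  -- characteristic 2
  have hchar : CharP F 2 := by
    obtain ⟨k, hp, hk⟩ := FiniteField.card F (ringChar F)
    have h2 : ringChar F = 2 := by
      have h3 : ringChar F ∣ 2 ^ n := by
        rw [← hcard, hk]; exact dvd_pow_self _ k.ne_zero
      exact (Nat.prime_dvd_prime_iff_eq hp Nat.prime_two).mp (hp.dvd_of_dvd_pow h3)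
    rw [← h2]; exact ringChar.charP F
  have hexp : ExpChar F 2 := ExpChar.prime Nat.prime_two
  have hadd : ∀ a b : F, a + b = 0 → a = b := by
    intro a b h
    have := eq_neg_of_add_eq_zero_left h
    rwa [CharTwo.neg_eq] at this
  have hu0 : u ≠ 0 := by
    intro h; rw [h, zero_pow (by omega)] at hu; exact zero_ne_one hu
  have hcard' : Fintype.card F = q ^ 2 := by rw [hcard, hn, hqdef, ← pow_mul, mul_comm]
  have hU : ∀ x : F, x ≠ 0 → (x ^ (q - 1)) ^ (q + 1) = 1 := by
    intro x hx
    have hqq : 1 ≤ q ^ 2 := Nat.one_le_pow _ _ hq1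
    have he : (q - 1) * (q + 1) = q ^ 2 - 1 := by zify [hq1, hqq]; ring
    rw [← pow_mul, he, ← hcard']
    exact FiniteField.pow_card_sub_one_eq_one x hx
  have hs2 : 2 ≤ s := by
    by_contra h
    have hs1 : s = 1 := by omega
    rw [hs1, Nat.gcd_one_left] at hr
    omega
  have hrs : Nat.gcd s (q + 1) ∣ s := Nat.gcd_dvd_left _ _
  have hnv : ∀ lam : F, lam ^ (q + 1) = 1 → lam ^ s + u ≠ 0 := by
    intro lam hlam h0
    have hls : lam ^ s = u := hadd _ _ h0
    exact hu2 ⟨lam ^ (s / Nat.gcd s (q + 1)),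
      by rw [← pow_mul, mul_comm, pow_mul, hlam, one_pow],
      by rw [← pow_mul, Nat.div_mul_cancel hrs, hls]⟩
  have hfrob : ∀ a b : F, (a + b) ^ q = a ^ q + b ^ q := by
    intro a b; rw [hqdef]; exact add_pow_char_pow a b 2 m
  have hkey : ∀ lam : F, lam ^ (q + 1) = 1 →
      (lam ^ s + u) ^ q * (u * lam ^ s) = lam ^ s + u := by
    intro lam hlam
    have h1 : (lam ^ s) ^ q * lam ^ s = 1 := by
      rw [← pow_mul, ← pow_add, ← mul_add_one s q, mul_comm s (q+1), pow_mul, hlam, one_pow]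
    have h2 : u ^ q * u = 1 := by
      rw [← pow_succ, hu]
    calc (lam ^ s + u) ^ q * (u * lam ^ s)
        = ((lam ^ s) ^ q + u ^ q) * (u * lam ^ s) := by rw [hfrob]
      _ = u * ((lam ^ s) ^ q * lam ^ s) + (u ^ q * u) * lam ^ s := by ring
      _ = lam ^ s + u := by rw [h1, h2]; ring
  have hfx : ∀ x : F, x ^ d + u * x = x * ((x ^ (q - 1)) ^ s + u) := by
    intro x
    rw [hd, pow_add, pow_one, mul_comm s (q - 1), pow_mul]
    ring
  have hinj : Function.Injective (fun x : F => x ^ d + u * x) := by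
    intro x y hxy
    simp only [hfx] at hxy
    rcases eq_or_ne x 0 with hx | hx
    · rcases eq_or_ne y 0 with hy | hy
      · rw [hx, hy]
      · exfalso
        rw [hx, zero_mul] at hxy
        exact mul_ne_zero hy (hnv _ (hU y hy)) hxy.symm
    · rcases eq_or_ne y 0 with hy | hy
      · exfalso
        rw [hy, zero_mul] at hxy
        exact mul_ne_zero hx (hnv _ (hU x hx)) hxy
      · obtain ⟨lam, hlamdef⟩ : ∃ lam : F, lam = x ^ (q - 1) := ⟨_, rfl⟩
        obtain ⟨mu, hmudef⟩ : ∃ mu : F, mu = y ^ (q - 1) := ⟨_, rfl⟩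
        rw [← hlamdef, ← hmudef] at hxy
        have hlam : lam ^ (q + 1) = 1 := by rw [hlamdef]; exact hU x hx
        have hmu : mu ^ (q + 1) = 1 := by rw [hmudef]; exact hU y hy
        have hnl := hnv lam hlam
        have hnm := hnv mu hmu
        have hlam0 : lam ≠ 0 := by
          intro h; rw [h, zero_pow (by omega)] at hlam; exact zero_ne_one hlam
        have hmu0 : mu ≠ 0 := by
          intro h; rw [h, zero_pow (by omega)] at hmu; exact zero_ne_one hmu
        obtain ⟨A, hA⟩ : ∃ A : F, A = x * (lam ^ s + u) := ⟨_, rfl⟩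
        have hxy' : A = y * (mu ^ s + u) := by rw [hA, hxy]
        have hA0 : A ≠ 0 := by rw [hA]; exact mul_ne_zero hx hnl
        have hxq : x ^ q = lam * x := by
          rw [hlamdef, ← pow_succ, Nat.sub_add_cancel hq1]

        have hyq : y ^ q = mu * y := by
          rw [hmudef, ← pow_succ, Nat.sub_add_cancel hq1]
        have e1 : A ^ q * (u * lam ^ s) = lam * A := by
          calc A ^ q * (u * lam ^ s) = x ^ q * ((lam ^ s + u) ^ q * (u * lam ^ s)) := by
                rw [hA, mul_pow]; ring
            _ = x ^ q * (lam ^ s + u) := by rw [hkey lam hlam]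
            _ = lam * A := by rw [hxq, hA]; ring
        have e2 : A ^ q * (u * mu ^ s) = mu * A := by
          calc A ^ q * (u * mu ^ s) = y ^ q * ((mu ^ s + u) ^ q * (u * mu ^ s)) := by
                rw [hxy', mul_pow]; ring
            _ = y ^ q * (mu ^ s + u) := by rw [hkey mu hmu]
            _ = mu * A := by rw [hyq, hxy']; ring
        have e3 : lam ^ s * mu = mu ^ s * lam := by
          have h5 : (A ^ q * u) * (lam ^ s * mu) = (A ^ q * u) * (mu ^ s * lam) := by
            calc (A ^ q * u) * (lam ^ s * mu) = (A ^ q * (u * lam ^ s)) * mu := by ring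
              _ = lam * A * mu := by rw [e1]
              _ = (A ^ q * (u * mu ^ s)) * lam := by rw [e2]; ring
              _ = (A ^ q * u) * (mu ^ s * lam) := by ring
          exact mul_left_cancel₀ (mul_ne_zero (pow_ne_zero _ hA0) hu0) h5
        have hlmeq : lam ^ (s - 1) = mu ^ (s - 1) := by
          have h5 : lam ^ (s - 1) * (lam * mu) = mu ^ (s - 1) * (lam * mu) := by
            calc lam ^ (s - 1) * (lam * mu) = (lam ^ (s - 1) * lam) * mu := by ring
              _ = lam ^ s * mu := by rw [← pow_succ, Nat.sub_add_cancel (by omega)]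
              _ = mu ^ s * lam := e3
              _ = (mu ^ (s - 1) * mu) * lam := by rw [← pow_succ, Nat.sub_add_cancel (by omega)]
              _ = mu ^ (s - 1) * (lam * mu) := by ring
          exact mul_right_cancel₀ (mul_ne_zero hlam0 hmu0) h5
        have hlm : lam = mu := by
          set t := lam * mu⁻¹ with ht
          have ht1 : t ^ (q + 1) = 1 := by
            rw [ht, mul_pow, inv_pow, hlam, hmu, inv_one, mul_one]
          have ht2 : t ^ (s - 1) = 1 := by
            rw [ht, mul_pow, inv_pow, hlmeq, mul_inv_cancel₀ (pow_ne_zero _ hmu0)]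
          have hdvd : orderOf t ∣ 1 := by
            rw [← hgcd2]
            exact Nat.dvd_gcd (orderOf_dvd_of_pow_eq_one ht2) (orderOf_dvd_of_pow_eq_one ht1)
          have := orderOf_eq_one_iff.mp (Nat.dvd_one.mp hdvd)
          rwa [ht, mul_inv_eq_one₀ hmu0] at this
        rw [← hlm] at hxy
        exact mul_right_cancel₀ hnl hxy
  exact Finite.injective_iff_bijective.mp hinj
end

section
/- Let n = 2m, s a positive integer, d = s(2^m - 1) + 1 with gcd(d, 2^n - 1) = 1, r := gcd(s, 2^m + 1) > 1 and gcd(s - 1, 2^m + 1) = 1. Then for every u ∈ U \ U^r, the map x ↦ u^{-1} x^d is a complete permutation of F_{2^n}, i.e., both x ↦ u^{-1} x^d and x ↦ u^{-1} x^d + x are bijections of F_{2^n}. -/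
lemma niho_pow_inj {M : Type*} [Monoid M] {N e : ℕ} (hN : 1 < N) (he : Nat.gcd e N = 1)
    {x y : M} (hx : x ^ N = 1) (hy : y ^ N = 1) (h : x ^ e = y ^ e) : x = y := by
  obtain ⟨k, -, hk⟩ := Nat.exists_mul_mod_eq_one_of_coprime he hN
  calc x = x ^ ((e * k) % N) := by rw [hk, pow_one]
    _ = x ^ (e * k) := (pow_eq_pow_mod _ hx).symm
    _ = (x ^ e) ^ k := by rw [pow_mul]
    _ = (y ^ e) ^ k := by rw [h]
    _ = y := by rw [← pow_mul, pow_eq_pow_mod _ hy, hk, pow_one]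

/-- Under the hypotheses of the Niho binomial theorem, `x ↦ u⁻¹ x^d` is a complete
permutation of `𝔽_{2^n}`: both `u⁻¹ x^d` and `u⁻¹ x^d + x` are bijections. -/
theorem monomial_complete_permutation (n m s : ℕ) (hm : 0 < m) (hn : n = 2 * m) (hs : 0 < s)
    (F : Type*) [Field F] [Fintype F] (hcard : Fintype.card F = 2 ^ n)
    (d : ℕ) (hd : d = s * (2 ^ m - 1) + 1)
    (hgcd : Nat.gcd d (2 ^ n - 1) = 1)
    (hr : 1 < Nat.gcd s (2 ^ m + 1))
    (hgcd2 : Nat.gcd (s - 1) (2 ^ m + 1) = 1)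
    (u : F) (hu : u ^ (2 ^ m + 1) = 1)
    (hu2 : ¬ ∃ v : F, v ^ (2 ^ m + 1) = 1 ∧ u = v ^ Nat.gcd s (2 ^ m + 1)) :
    Function.Bijective (fun x : F => u⁻¹ * x ^ d) ∧
    Function.Bijective (fun x : F => u⁻¹ * x ^ d + x) := by
  set q : ℕ := 2 ^ m with hq
  have hq2 : 2 ≤ q := by
    have : 2 ^ 1 ≤ 2 ^ m := Nat.pow_le_pow_right (by norm_num) hm
    simpa using this
  -- characteristic 2
  haveI hchar : CharP F 2 := by
    obtain ⟨k, hk, hcardk⟩ := FiniteField.card F (ringChar F)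
    have h2 : ringChar F ∣ 2 ^ n := by
      rw [← hcard, hcardk]; exact dvd_pow_self _ (by positivity)
    have hdvd := Nat.Prime.dvd_of_dvd_pow hk h2
    have hr2 : ringChar F = 2 := (Nat.prime_dvd_prime_iff_eq hk Nat.prime_two).mp hdvd
    rw [← hr2]; exact ringChar.charP F
  have frob : ∀ a b : F, (a + b) ^ q = a ^ q + b ^ q := fun a b => add_pow_char_pow ..
  have hcardq : Fintype.card F = q * q := by
    rw [hcard, hn, hq, two_mul, pow_add]
  have hcard1 : Fintype.card F - 1 = (q - 1) * (q + 1) := by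
    obtain ⟨b, hb⟩ : ∃ b, q = b + 2 := ⟨q - 2, by omega⟩
    rw [hcardq, hb]
    have e1 : b + 2 - 1 = b + 1 := rfl
    rw [e1, Nat.sub_eq_iff_eq_add (by nlinarith)]
    ring
  have hs2 : 2 ≤ s := by
    by_contra h
    have hs1 : s = 1 := by omega
    rw [hs1, Nat.gcd_one_left] at hr
    omega
  have hd' : d = s * (q - 1) + 1 := hd
  have hu0 : u ≠ 0 := by
    intro h; rw [h] at hu; simp at hu
  have hui : u⁻¹ ≠ 0 := inv_ne_zero hu0
  -- every nonzero x gives an element of U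
  have hUmem : ∀ x : F, x ≠ 0 → (x ^ (q - 1)) ^ (q + 1) = 1 := by
    intro x hx
    rw [← pow_mul, ← hcard1]
    exact FiniteField.pow_card_sub_one_eq_one x hx
  have hNq : 1 < q + 1 := by omega
  -- λ^s + u ≠ 0 for λ ∈ U
  have hne : ∀ l : F, l ^ (q + 1) = 1 → l ^ s + u ≠ 0 := by
    intro l hl h0
    apply hu2
    have hlu : l ^ s = u := by
      have h1 := eq_neg_of_add_eq_zero_left h0
      rwa [CharTwo.neg_eq] at h1
    obtain ⟨t, ht⟩ := Nat.gcd_dvd_left s (q + 1)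
    refine ⟨l ^ t, ?_, ?_⟩
    · rw [← pow_mul, mul_comm, pow_mul, hl, one_pow]
    · rw [← pow_mul, mul_comm, ← ht, hlu]
  -- key identity on U
  have hkey : ∀ l : F, l ^ (q + 1) = 1 → ((l ^ s) ^ q + u ^ q) * (l ^ s * u) = l ^ s + u := by
    intro l hl
    have h1 : (l ^ s) ^ q * l ^ s = 1 := by
      rw [← pow_mul, ← pow_add, ← Nat.mul_succ, mul_comm s, pow_mul, hl, one_pow]
    have h2 : u ^ q * u = 1 := by
      rw [← pow_succ]; exact hu
    linear_combination u * h1 + l ^ s * h2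
  have hnz : ∀ l : F, l ^ (q + 1) = 1 → l ≠ 0 := by
    intro l hl h0; rw [h0] at hl; simp at hl
  -- x^d = x * (x^(q-1))^s for all x
  have hpd : ∀ x : F, x ^ d = x * (x ^ (q - 1)) ^ s := by
    intro x
    rw [hd', pow_succ, ← pow_mul, mul_comm s, pow_mul, mul_comm]
  have hn2 : 1 < 2 ^ n - 1 := by
    have : 2 ^ 2 ≤ 2 ^ n := Nat.pow_le_pow_right (by norm_num) (by omega)
    omega
  have hxN : ∀ x : F, x ≠ 0 → x ^ (2 ^ n - 1) = 1 := by
    intro x hx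
    rw [← hcard]
    exact FiniteField.pow_card_sub_one_eq_one x hx
  -- first bijection
  have hbij1 : Function.Bijective (fun x : F => u⁻¹ * x ^ d) := by
    rw [← Finite.injective_iff_bijective]
    intro x y hxy
    simp only at hxy
    have hxy' : x ^ d = y ^ d := mul_left_cancel₀ hui hxy
    by_cases hx : x = 0
    · subst hx
      have hy0 : y ^ d = 0 := by rw [← hxy']; simp [hd']
      exact ((pow_eq_zero_iff (show d ≠ 0 by omega)).mp hy0).symm
    · by_cases hy : y = 0
      · subst hy
        exfalso
        apply pow_ne_zero d hx
        rw [hxy']; simp [hd']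
      · exact niho_pow_inj hn2 hgcd (hxN x hx) (hxN y hy) hxy'
  refine ⟨hbij1, ?_⟩
  -- second bijection
  rw [← Finite.injective_iff_bijective]
  intro x y hxy
  simp only at hxy
  have hg : x ^ d + u * x = y ^ d + u * y := by
    have h := congrArg (fun z => u * z) hxy
    simp only [mul_add, ← mul_assoc, mul_inv_cancel₀ hu0, one_mul] at h
    exact h
  by_cases hx : x = 0
  · subst hx
    by_contra hy0
    have hy : y ≠ 0 := fun h => hy0 h.symm
    have : (0 : F) = y * ((y ^ (q - 1)) ^ s + u) := by
      rw [mul_add, mul_comm _ u, ← hpd]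
      simpa [zero_pow (show d ≠ 0 by omega)] using hg
    exact (mul_ne_zero hy (hne _ (hUmem y hy))) this.symm
  by_cases hy : y = 0
  · subst hy
    exfalso
    apply mul_ne_zero hx (hne _ (hUmem x hx))
    rw [mul_add, mul_comm _ u, ← hpd]
    simpa [zero_pow (show d ≠ 0 by omega)] using hg
  -- both nonzero
  set l : F := x ^ (q - 1) with hldef
  set w : F := y ^ (q - 1) with hwdef
  have hl : l ^ (q + 1) = 1 := hUmem x hx
  have hw : w ^ (q + 1) = 1 := hUmem y hy
  have hxd : x ^ d = x * l ^ s := hpd x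
  have hyd : y ^ d = y * w ^ s := hpd y
  have h1 : x * (l ^ s + u) = y * (w ^ s + u) := by
    linear_combination hg - hxd + hyd
  have h2 : x ^ q * ((l ^ s) ^ q + u ^ q) = y ^ q * ((w ^ s) ^ q + u ^ q) := by
    have h := congrArg (fun z => z ^ q) h1
    simp only [mul_pow] at h
    rw [frob, frob] at h
    exact h
  have e1 := hkey l hl
  have e2 := hkey w hw
  have h3 : x ^ q * (l ^ s + u) * w ^ s = y ^ q * (w ^ s + u) * l ^ s := by
    linear_combination (l ^ s * u * w ^ s) * h2 - x ^ q * w ^ s * e1 + y ^ q * l ^ s * e2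
  have h4 : (x ^ q * w ^ s * y) * (l ^ s + u) = (y ^ q * l ^ s * x) * (l ^ s + u) := by
    linear_combination y * h3 - y ^ q * l ^ s * h1
  have h5 : x ^ q * w ^ s * y = y ^ q * l ^ s * x :=
    mul_right_cancel₀ (hne l hl) h4
  have hxq : x ^ q = l * x := by
    rw [hldef, ← pow_succ]
    congr 1
    omega
  have hyq : y ^ q = w * y := by
    rw [hwdef, ← pow_succ]
    congr 1
    omega
  have h6 : (l * w ^ s) * (x * y) = (w * l ^ s) * (x * y) := by
    linear_combination h5 - w ^ s * y * hxq + l ^ s * x * hyq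
  have h7 : l * w ^ s = w * l ^ s := mul_right_cancel₀ (mul_ne_zero hx hy) h6
  have hss : s = (s - 1) + 1 := by omega
  have h8 : w ^ (s - 1) * (l * w) = l ^ (s - 1) * (l * w) := by
    have := h7
    rw [hss, pow_succ, pow_succ] at this
    ring_nf at this ⊢
    linear_combination this
  have h9 : w ^ (s - 1) = l ^ (s - 1) :=
    mul_right_cancel₀ (mul_ne_zero (hnz l hl) (hnz w hw)) h8
  have hlw : w = l := niho_pow_inj hNq hgcd2 hw hl h9
  have : x * (l ^ s + u) = y * (l ^ s + u) := by rw [h1, hlw]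
  exact mul_right_cancel₀ (hne l hl) this
end

section
/- Let m be odd, n = 2m, s = 6, d = 6(2^m - 1) + 1, and assume 5 does not divide m. Then gcd(d, 2^n - 1) = 1, gcd(6, 2^m + 1) = 3, and gcd(5, 2^m + 1) = 1; consequently for every u ∈ U \ U^3, the map x ↦ u^{-1} x^d is a complete permutation of F_{2^n}. -/
section Aux

/-- 3 divides `2^m+1` for odd `m`. -/
lemma aux_three_dvd (m : ℕ) (hm : Odd m) : 3 ∣ 2 ^ m + 1 := by
  have : ((2 ^ m + 1 : ℕ) : ZMod 3) = 0 := by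
    push_cast
    have h2 : (2 : ZMod 3) = -1 := by decide
    rw [h2, hm.neg_one_pow]; ring
  exact (ZMod.natCast_eq_zero_iff _ _).mp this

/-- 5 does not divide `2^m+1` for odd `m`. -/
lemma aux_five_not_dvd (m : ℕ) (hm : Odd m) : ¬ (5 ∣ 2 ^ m + 1) := by
  intro h
  have h0 : ((2 ^ m + 1 : ℕ) : ZMod 5) = 0 := (ZMod.natCast_eq_zero_iff _ _).mpr h
  push_cast at h0
  have hcyc : (2 : ZMod 5) ^ m = 2 ^ (m % 4) := by
    conv_lhs => rw [← Nat.div_add_mod m 4]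
    rw [pow_add, pow_mul, show ((2:ZMod 5)^4 = 1) from by decide, one_pow, one_mul]
  rw [hcyc] at h0
  have hm4 : m % 4 = 1 ∨ m % 4 = 3 := by
    have h1 : m % 4 % 2 = m % 2 := Nat.mod_mod_of_dvd m (by norm_num)
    have h2 : m % 2 = 1 := Nat.odd_iff.mp hm
    omega
  rcases hm4 with h | h <;> rw [h] at h0 <;> revert h0 <;> decide

/-- 11 does not divide `2^m+1` for odd `m` with `5 ∤ m`. -/
lemma aux_eleven_not_dvd (m : ℕ) (hm : Odd m) (h5 : ¬ (5 ∣ m)) : ¬ (11 ∣ 2 ^ m + 1) := by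
  intro h
  have h0 : ((2 ^ m + 1 : ℕ) : ZMod 11) = 0 := (ZMod.natCast_eq_zero_iff _ _).mpr h
  push_cast at h0
  have hcyc : (2 : ZMod 11) ^ m = 2 ^ (m % 10) := by
    conv_lhs => rw [← Nat.div_add_mod m 10]
    rw [pow_add, pow_mul, show ((2:ZMod 11)^10 = 1) from by decide, one_pow, one_mul]
  rw [hcyc] at h0
  have hm10 : m % 10 = 1 ∨ m % 10 = 3 ∨ m % 10 = 7 ∨ m % 10 = 9 := by
    have h1 : m % 10 % 2 = m % 2 := Nat.mod_mod_of_dvd m (by norm_num)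
    have h2 : m % 2 = 1 := Nat.odd_iff.mp hm
    have h3 : m % 10 ≠ 5 := fun hc => h5 (by omega)
    omega
  rcases hm10 with h | h | h | h <;> rw [h] at h0 <;> revert h0 <;> decide

/-- In a monoid, an element whose `s`-th and `t`-th powers are `1`, with `gcd s t = 1`,
is itself `1`. -/
lemma aux_eq_one_of_pow_eq_one {M : Type*} [Monoid M] {a : M} {s t : ℕ}
    (hs : a ^ s = 1) (ht : a ^ t = 1) (h : Nat.gcd s t = 1) : a = 1 := by
  have h1 : orderOf a ∣ s := orderOf_dvd_of_pow_eq_one hs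
  have h2 : orderOf a ∣ t := orderOf_dvd_of_pow_eq_one ht
  have := Nat.dvd_gcd h1 h2
  rw [h, Nat.dvd_one] at this
  exact orderOf_eq_one_iff.mp this

end Aux

/-- For odd `m` with `5 ∤ m`, `n = 2m`, `d = 6(2^m - 1) + 1`: the arithmetic conditions
`gcd(d, 2^n-1) = 1`, `gcd(6, 2^m+1) = 3`, `gcd(5, 2^m+1) = 1` hold, and consequently for
every `u ∈ U \ U³` the map `x ↦ u⁻¹ x^d` is a complete permutation of `𝔽_{2^n}`. -/
theorem complete_permutation_s_six (n m : ℕ) (hm : Odd m) (h5 : ¬ (5 ∣ m)) (hn : n = 2 * m)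
    (d : ℕ) (hd : d = 6 * (2 ^ m - 1) + 1)
    (F : Type*) [Field F] [Fintype F] (hcard : Fintype.card F = 2 ^ n) :
    Nat.gcd d (2 ^ n - 1) = 1 ∧
    Nat.gcd 6 (2 ^ m + 1) = 3 ∧
    Nat.gcd 5 (2 ^ m + 1) = 1 ∧
    ∀ u : F, u ^ (2 ^ m + 1) = 1 → (¬ ∃ v : F, v ^ (2 ^ m + 1) = 1 ∧ u = v ^ 3) →
      Function.Bijective (fun x : F => u⁻¹ * x ^ d) ∧
      Function.Bijective (fun x : F => u⁻¹ * x ^ d + x) := by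
  -- basic numeric setup
  have hm1 : 1 ≤ m := by
    rcases Nat.eq_zero_or_pos m with h | h
    · exact absurd (h ▸ hm) (by decide)
    · exact h
  obtain ⟨k, hk⟩ : ∃ k, 2 ^ m = k + 1 :=
    ⟨2 ^ m - 1, by have := Nat.one_le_two_pow (n := m); omega⟩
  have hdk : d = 6 * k + 1 := by omega
  have hn2 : 2 ^ n = (k + 1) ^ 2 := by
    rw [hn, Nat.mul_comm, pow_mul, hk]
  have hn2' : 2 ^ n - 1 = k ^ 2 + 2 * k := by
    have h1 : (k + 1) ^ 2 = k ^ 2 + 2 * k + 1 := by ring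
    omega
  -- Number-theoretic facts
  have h3dvd : 3 ∣ 2 ^ m + 1 := aux_three_dvd m hm
  have h5ndvd : ¬ (5 ∣ 2 ^ m + 1) := aux_five_not_dvd m hm
  have h11ndvd : ¬ (11 ∣ 2 ^ m + 1) := aux_eleven_not_dvd m hm h5
  have hodd : ¬ (2 ∣ 2 ^ m + 1) := by
    intro h
    have : 2 ∣ 2 ^ m := dvd_pow_self 2 (by omega)
    omega
  -- gcd(6, 2^m+1) = 3
  have g6 : Nat.gcd 6 (2 ^ m + 1) = 3 := by
    have hA : 3 ∣ Nat.gcd 6 (2 ^ m + 1) := Nat.dvd_gcd (by norm_num) h3dvd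
    have hB : Nat.gcd 6 (2 ^ m + 1) ∣ 3 := by
      have hg6 : Nat.gcd 6 (2 ^ m + 1) ∣ 6 := Nat.gcd_dvd_left _ _
      have hgq : Nat.gcd 6 (2 ^ m + 1) ∣ 2 ^ m + 1 := Nat.gcd_dvd_right _ _
      have hg2 : ¬ (2 ∣ Nat.gcd 6 (2 ^ m + 1)) := fun h => hodd (h.trans hgq)
      have hcop : Nat.Coprime 2 (Nat.gcd 6 (2 ^ m + 1)) :=
        (Nat.prime_two.coprime_iff_not_dvd).mpr hg2
      exact (Nat.Coprime.dvd_of_dvd_mul_left hcop.symm (by norm_num at hg6 ⊢; exact hg6))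
    exact Nat.dvd_antisymm hB hA
  -- gcd(5, 2^m+1) = 1
  have g5 : Nat.gcd 5 (2 ^ m + 1) = 1 :=
    (Nat.prime_five.coprime_iff_not_dvd).mpr h5ndvd
  -- gcd(d, 2^n - 1) = 1
  have c1 : Nat.Coprime d (2 ^ m - 1) := by
    rw [hd]
    have := (Nat.coprime_add_mul_right_left 1 (2 ^ m - 1) 6).mpr (Nat.coprime_one_left _)
    rwa [Nat.add_comm] at this
  have c2 : Nat.Coprime d (2 ^ m + 1) := by
    have hg1 : Nat.gcd d (2 ^ m + 1) ∣ d := Nat.gcd_dvd_left d (2 ^ m + 1)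
    have hg2 : Nat.gcd d (2 ^ m + 1) ∣ 2 ^ m + 1 := Nat.gcd_dvd_right d (2 ^ m + 1)
    have h6 : Nat.gcd d (2 ^ m + 1) ∣ 6 * (2 ^ m + 1) := hg2.mul_left 6
    have h11 : Nat.gcd d (2 ^ m + 1) ∣ 11 := by
      have heq : 6 * (2 ^ m + 1) - d = 11 := by omega
      exact heq ▸ Nat.dvd_sub h6 hg1
    have := (Nat.Prime.eq_one_or_self_of_dvd (by norm_num) _ h11)
    rcases this with h | h
    · exact h
    · exact absurd (h ▸ hg2) h11ndvd
  have gd : Nat.gcd d (2 ^ n - 1) = 1 := by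
    have hsplit : 2 ^ n - 1 = (2 ^ m - 1) * (2 ^ m + 1) := by
      have hk1 : 2 ^ m - 1 = k := by omega
      rw [hn2', hk1, hk]
      ring
    rw [hsplit]
    exact Nat.Coprime.mul_right c1 c2
  refine ⟨gd, g6, g5, ?_⟩
  -- field part
  have hn1 : 1 ≤ n := by omega
  -- characteristic 2
  have hp2 : CharP F 2 := by
    obtain ⟨p, hpc⟩ := CharP.exists F
    haveI := hpc
    obtain ⟨k', hp, hcardp⟩ := FiniteField.card F p
    have hpp : p = 2 := by
      have hdvd : p ∣ 2 ^ n := by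
        rw [← hcard, hcardp]
        exact dvd_pow_self p (by positivity)
      have h1 := (Nat.Prime.dvd_of_dvd_pow hp hdvd)
      have h2 := hp.two_le
      have h3 := Nat.le_of_dvd (by norm_num) h1
      omega
    rwa [hpp] at hpc
  haveI := hp2
  haveI : Fact (Nat.Prime 2) := ⟨Nat.prime_two⟩
  have hcard2 : Fintype.card F - 1 = k ^ 2 + 2 * k := by rw [hcard]; exact hn2'
  have hd1 : 1 ≤ d := by omega
  intro u hu hu3
  have hu0 : u ≠ 0 := by
    intro h
    rw [h, zero_pow (by positivity)] at hu
    exact zero_ne_one hu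
  -- power to card - 1 is 1
  have hpow1 : ∀ x : F, x ≠ 0 → x ^ (k ^ 2 + 2 * k) = 1 := by
    intro x hx
    have := FiniteField.pow_card_sub_one_eq_one x hx
    rwa [hcard2] at this
  -- d-th power map is injective
  have hdinj : ∀ x y : F, x ^ d = y ^ d → x = y := by
    intro x y hxy
    rcases eq_or_ne y 0 with hy | hy
    · subst hy
      rw [zero_pow (by omega)] at hxy
      exact pow_eq_zero_iff (by omega) |>.mp hxy
    rcases eq_or_ne x 0 with hx | hx
    · subst hx
      rw [zero_pow (by omega)] at hxy
      exact absurd ((pow_eq_zero_iff (n := d) (by omega)).mp hxy.symm) hy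
    have hxyd : (x / y) ^ d = 1 := by
      rw [div_pow, hxy, div_self (pow_ne_zero _ hy)]
    have hxyc : (x / y) ^ (k ^ 2 + 2 * k) = 1 := by
      rw [div_pow, hpow1 x hx, hpow1 y hy, div_one]
    have : x / y = 1 := aux_eq_one_of_pow_eq_one hxyd hxyc (by rw [← hn2']; exact gd)
    field_simp at this
    exact this
  have hbij1 : Function.Bijective (fun x : F => u⁻¹ * x ^ d) := by
    rw [← Finite.injective_iff_bijective]
    intro x y hxy
    simp only at hxy
    exact hdinj x y (mul_left_cancel₀ (inv_ne_zero hu0) hxy)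
  refine ⟨hbij1, ?_⟩
  -- the complete permutation part
  -- z(x) = x^k lies in U when x ≠ 0
  have hzU : ∀ x : F, x ≠ 0 → (x ^ k) ^ (2 ^ m + 1) = 1 := by
    intro x hx
    rw [← pow_mul, hk]
    have : k * (k + 1 + 1) = k ^ 2 + 2 * k := by ring
    rw [this]
    exact hpow1 x hx
  -- z^6 + u ≠ 0
  have hdenom : ∀ x : F, x ≠ 0 → (x ^ k) ^ 6 + u ≠ 0 := by
    intro x hx hc
    have : u = ((x ^ k) ^ 2) ^ 3 := by
      have h1 : (x ^ k) ^ 6 = u := by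
        have h2 : (x ^ k) ^ 6 = (x ^ k) ^ 6 + u + u := by
          rw [add_assoc, CharTwo.add_self_eq_zero, add_zero]
        rw [hc, zero_add] at h2
        exact h2
      rw [← h1]; ring
    exact hu3 ⟨(x ^ k) ^ 2, by rw [← pow_mul, mul_comm, pow_mul, hzU x hx, one_pow], this⟩
  -- factorization: x^d + u*x = x * ((x^k)^6 + u)
  have hfact : ∀ x : F, x ^ d + u * x = x * ((x ^ k) ^ 6 + u) := by
    intro x
    rw [hdk]
    rw [show (6 * k + 1) = k * 6 + 1 by ring, pow_succ, ← pow_mul]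
    ring
  -- key identity
  have hkey : ∀ x : F, x ≠ 0 →
      (x ^ d + u * x) ^ (2 ^ m) * u * (x ^ k) ^ 6 = (x ^ d + u * x) * x ^ k := by
    intro x hx
    have hx1 : x ^ (k ^ 2 + 2 * k) = 1 := hpow1 x hx
    have expand : (x ^ d + u * x) ^ (2 ^ m) = (x ^ d) ^ (2 ^ m) + (u * x) ^ (2 ^ m) :=
      add_pow_char_pow ..
    have e1 : x ^ (d * 2 ^ m) * (x ^ k) ^ 6 = x ^ (2 ^ m) := by
      rw [← pow_mul, ← pow_add]
      have : d * 2 ^ m + k * 6 = (k ^ 2 + 2 * k) * 6 + 2 ^ m := by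
        rw [hdk, hk]; ring
      rw [this, pow_add, pow_mul, hx1, one_pow, one_mul]
    have e2 : x ^ (2 ^ m) * (x ^ k) ^ 6 = x ^ d * x ^ k := by
      rw [← pow_mul, ← pow_add, ← pow_add]
      congr 1
      rw [hdk, hk]; ring
    have e3 : u ^ (2 ^ m) * u = 1 := by rw [← pow_succ, hu]
    have e4 : u * x ^ (2 ^ m) = u * x * x ^ k := by
      rw [hk, pow_succ]; ring
    calc (x ^ d + u * x) ^ (2 ^ m) * u * (x ^ k) ^ 6
        = u * (x ^ (d * 2 ^ m) * (x ^ k) ^ 6)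
          + (u ^ (2 ^ m) * u) * (x ^ (2 ^ m) * (x ^ k) ^ 6) := by
          rw [expand, mul_pow, ← pow_mul]; ring
      _ = u * x ^ (2 ^ m) + 1 * (x ^ d * x ^ k) := by rw [e1, e2, e3]
      _ = (x ^ d + u * x) * x ^ k := by rw [one_mul, e4]; ring
  -- nonvanishing of x^d + u*x for x ≠ 0
  have hvne : ∀ x : F, x ≠ 0 → x ^ d + u * x ≠ 0 := by
    intro x hx
    rw [hfact]
    exact mul_ne_zero hx (hdenom x hx)
  -- injectivity of the complete permutation
  rw [← Finite.injective_iff_bijective]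
  intro x y hxy
  simp only at hxy
  have hmain : x ^ d + u * x = y ^ d + u * y := by
    have h1 : ∀ t : F, u * (u⁻¹ * t ^ d + t) = t ^ d + u * t := by
      intro t
      field_simp
    rw [← h1 x, ← h1 y, hxy]
  rcases eq_or_ne x 0 with hx | hx
  · subst hx
    rcases eq_or_ne y 0 with hy | hy
    · exact hy.symm
    · exfalso
      apply hvne y hy
      rw [← hmain, zero_pow (by omega), mul_zero, add_zero]
  rcases eq_or_ne y 0 with hy | hy
  · exfalso
    apply hvne x hx
    rw [hmain, hy, zero_pow (by omega), mul_zero, add_zero]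
  -- both nonzero
  have hkx := hkey x hx
  have hky := hkey y hy
  rw [hmain] at hkx
  set v := y ^ d + u * y with hv
  have hvne' : v ≠ 0 := hvne y hy
  have hvq : v ^ (2 ^ m) ≠ 0 := pow_ne_zero _ hvne'
  have hzx : (x : F) ^ k ≠ 0 := pow_ne_zero _ hx
  have hzy : (y : F) ^ k ≠ 0 := pow_ne_zero _ hy
  -- v^q * u * zx^6 = v * zx  and  v^q * u * zy^6 = v * zy
  have hcross : v ^ (2 ^ m) * u * ((x ^ k) ^ 6 * y ^ k) =
      v ^ (2 ^ m) * u * ((y ^ k) ^ 6 * x ^ k) := by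
    calc v ^ (2 ^ m) * u * ((x ^ k) ^ 6 * y ^ k)
        = (v ^ (2 ^ m) * u * (x ^ k) ^ 6) * y ^ k := by ring
      _ = (v * x ^ k) * y ^ k := by rw [hkx]
      _ = (v * y ^ k) * x ^ k := by ring
      _ = (v ^ (2 ^ m) * u * (y ^ k) ^ 6) * x ^ k := by rw [hky]
      _ = v ^ (2 ^ m) * u * ((y ^ k) ^ 6 * x ^ k) := by ring
  have hc2 : (x ^ k) ^ 6 * y ^ k = (y ^ k) ^ 6 * x ^ k :=
    mul_left_cancel₀ (mul_ne_zero hvq hu0) hcross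
  -- deduce zx^5 = zy^5
  have h5eq : (x ^ k) ^ 5 = (y ^ k) ^ 5 := by
    have : (x ^ k) ^ 5 * (x ^ k * y ^ k) = (y ^ k) ^ 5 * (x ^ k * y ^ k) := by
      calc (x ^ k) ^ 5 * (x ^ k * y ^ k) = (x ^ k) ^ 6 * y ^ k := by ring
        _ = (y ^ k) ^ 6 * x ^ k := hc2
        _ = (y ^ k) ^ 5 * (x ^ k * y ^ k) := by ring
    exact mul_right_cancel₀ (mul_ne_zero hzx hzy) this
  -- deduce zx = zy using gcd(5, 2^m+1) = 1
  have hzeq : x ^ k = y ^ k := by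
    have hw5 : (x ^ k / y ^ k) ^ 5 = 1 := by
      rw [div_pow, h5eq, div_self (pow_ne_zero _ hzy)]
    have hwU : (x ^ k / y ^ k) ^ (2 ^ m + 1) = 1 := by
      rw [div_pow, hzU x hx, hzU y hy, div_one]
    have := aux_eq_one_of_pow_eq_one hw5 hwU g5
    field_simp at this
    exact this
  -- conclude x = y
  have heq2 : x * ((x ^ k) ^ 6 + u) = y * ((y ^ k) ^ 6 + u) := by
    rw [← hfact x, ← hfact y, hmain, hv]
  rw [← hzeq] at heq2
  exact mul_right_cancel₀ (hdenom x hx) heq2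
end

section
/- Let n = 2m, and for i = 1, ..., t let d_i = s_i(2^m - 1) + e with gcd(d_1, 2^n - 1) = 1. For w_2, ..., w_t ∈ F_{2^n}, the character sum Σ_{x ∈ F_{2^n}} (-1)^{Tr(x^{d_1} + Σ_{i=2}^t w_i x^{d_i})} equals (N - 1)·2^m, where N is the number of λ in the unit circle U = {λ : λ^(2^m+1) = 1} satisfying λ^{d_1} + Σ_{i=2}^t w_i λ^{d_i} + (λ^{d_1} + Σ_{i=2}^t w_i λ^{d_i})^{2^m} = 0. -/
lemma niho_aux_card_pow_eq_one {F : Type*} [Field F] [Fintype F] [DecidableEq F]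
    (k : ℕ) (hk : 0 < k) (hdvd : k ∣ Fintype.card F - 1) :
    (Finset.univ.filter fun x : F => x ^ k = 1).card = k := by
  obtain ⟨g, hg⟩ := IsCyclic.exists_generator (α := Fˣ)
  have hog : orderOf g = Fintype.card Fˣ := by
    rw [orderOf_eq_card_of_forall_mem_zpowers hg, Nat.card_eq_fintype_card]
  have hcard : Fintype.card Fˣ = Fintype.card F - 1 := Fintype.card_units (α := F)
  obtain ⟨c, hc⟩ := hdvd
  have hcpos : 0 < c := by
    rcases Nat.eq_zero_or_pos c with h | h
    · exfalso
      have h1 : 0 < Fintype.card F - 1 := by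
        have := Fintype.one_lt_card (α := F)
        omega
      rw [h, Nat.mul_zero] at hc
      omega
    · exact h
  have horder : orderOf ((g ^ c : Fˣ) : F) = k := by
    rw [orderOf_units, orderOf_pow, hog, hcard, hc, Nat.gcd_eq_right ⟨k, by ring⟩,
      Nat.mul_div_cancel _ hcpos]
  have hprim : IsPrimitiveRoot ((g ^ c : Fˣ) : F) k := by
    have := IsPrimitiveRoot.orderOf ((g ^ c : Fˣ) : F)
    rwa [horder] at this
  have hset : (Finset.univ.filter fun x : F => x ^ k = 1) = Polynomial.nthRootsFinset k (1 : F) := by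
    ext x
    simp [Polynomial.mem_nthRootsFinset hk]
  rw [hset, hprim.card_nthRootsFinset]

/-- Niho-type exponential sum lemma: with `n = 2m`, `d₁ = s₁(2^m-1)+e`, `dᵢ = sᵢ(2^m-1)+e`,
`gcd(d₁, 2^n-1) = 1`, and `wᵢ ∈ 𝔽_{2^n}`, the character sum
`∑_x (-1)^{Tr(x^{d₁} + ∑ᵢ wᵢ x^{dᵢ})}` equals `(N - 1)·2^m`, where `N` counts the `λ` in the
unit circle `U = {λ : λ^(2^m+1) = 1}` with
`λ^{d₁} + ∑ᵢ wᵢ λ^{dᵢ} + (λ^{d₁} + ∑ᵢ wᵢ λ^{dᵢ})^{2^m} = 0`.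
`Tr` is the absolute trace `x ↦ ∑_{j<n} x^{2^j}` with values in `𝔽_2 ⊆ F`. -/
theorem niho_exponential_sum (n m : ℕ) (hm : 0 < m) (hn : n = 2 * m)
    (F : Type*) [Field F] [Fintype F] [DecidableEq F] (hcard : Fintype.card F = 2 ^ n)
    (ι : Type*) [Fintype ι] (w : ι → F)
    (s₁ : ℕ) (s : ι → ℕ) (e : ℕ) (he : 0 < e)
    (d₁ : ℕ) (hd₁ : d₁ = s₁ * (2 ^ m - 1) + e)
    (d : ι → ℕ) (hd : ∀ i, d i = s i * (2 ^ m - 1) + e)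
    (hgcd : Nat.gcd d₁ (2 ^ n - 1) = 1) :
    ∑ x : F,
        (if (∑ j ∈ Finset.range n, (x ^ d₁ + ∑ i, w i * x ^ d i) ^ 2 ^ j) = 0
          then (1 : ℤ) else -1)
      = (((Finset.univ.filter (fun lam : F => lam ^ (2 ^ m + 1) = 1 ∧
            (lam ^ d₁ + ∑ i, w i * lam ^ d i) +
              (lam ^ d₁ + ∑ i, w i * lam ^ d i) ^ 2 ^ m = 0)).card : ℤ) - 1) * 2 ^ m := by
  classical
  -- basic numerology
  have h2m : 2 ≤ 2 ^ m := by
    calc 2 = 2 ^ 1 := (pow_one 2).symm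
    _ ≤ 2 ^ m := Nat.pow_le_pow_right (by norm_num) hm
  have hqq : 2 ^ n = 2 ^ m * 2 ^ m := by rw [hn, two_mul, pow_add]
  have hcardm1 : Fintype.card F - 1 = (2 ^ m + 1) * (2 ^ m - 1) := by
    obtain ⟨b, hb⟩ : ∃ b, 2 ^ m = b + 1 := ⟨2 ^ m - 1, by omega⟩
    rw [hcard, hqq, hb]
    simp only [Nat.add_sub_cancel]
    ring_nf
    omega
  -- characteristic 2
  haveI hchar2 : CharP F 2 := by
    obtain ⟨p, hp⟩ := CharP.exists F
    haveI := hp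
    have hprime : p.Prime := CharP.char_is_prime F p
    obtain ⟨k, -, hcardp⟩ := FiniteField.card F p
    have hp2 : p = 2 := by
      have hdvd2 : p ∣ 2 ^ n := by
        rw [← hcard, hcardp]
        exact dvd_pow_self p k.2.ne'
      have := hprime.dvd_of_dvd_pow hdvd2
      exact ((Nat.prime_dvd_prime_iff_eq hprime Nat.prime_two).mp this)
    rwa [hp2] at hp
  haveI : Fact (Nat.Prime 2) := ⟨Nat.prime_two⟩
  -- abbreviations
  set f : F → F := fun x => x ^ d₁ + ∑ i, w i * x ^ d i with hf
  set S : F → F := fun y => ∑ j ∈ Finset.range m, y ^ 2 ^ j with hS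
  set U : Finset F := Finset.univ.filter fun x : F => x ^ (2 ^ m + 1) = 1 with hU
  set V : Finset F := Finset.univ.filter fun v : F => v ^ (2 ^ m - 1) = 1 with hV
  -- cardinalities of U and V
  have hUcard : U.card = 2 ^ m + 1 :=
    niho_aux_card_pow_eq_one _ (by omega) ⟨2 ^ m - 1, hcardm1⟩
  have hVcard : V.card = 2 ^ m - 1 :=
    niho_aux_card_pow_eq_one _ (by omega) ⟨2 ^ m + 1, by rw [hcardm1]; ring⟩
  -- basic properties of S
  have hS0 : S 0 = 0 := by
    simp only [hS]
    apply Finset.sum_eq_zero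
    intro j _
    exact zero_pow (by positivity)
  have hSadd : ∀ a b : F, S (a + b) = S a + S b := by
    intro a b
    simp only [hS]
    rw [← Finset.sum_add_distrib]
    exact Finset.sum_congr rfl fun j _ => add_pow_char_pow a b 2 j
  have hS01 : ∀ y : F, y ^ 2 ^ m = y → S y = 0 ∨ S y = 1 := by
    intro y hy
    have hsq : S y * S y = S y := by
      have h1 : S y * S y = ∑ j ∈ Finset.range m, y ^ 2 ^ (j + 1) := by
        have := sum_pow_char (R := F) 2 (Finset.range m) (fun j => y ^ 2 ^ j)
        calc S y * S y = (S y) ^ 2 := (sq (S y)).symm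
        _ = ∑ j ∈ Finset.range m, (y ^ 2 ^ j) ^ 2 := this
        _ = ∑ j ∈ Finset.range m, y ^ 2 ^ (j + 1) := by
            refine Finset.sum_congr rfl fun j _ => ?_
            rw [← pow_mul, pow_succ]
      have h2 : (∑ j ∈ Finset.range (m + 1), y ^ 2 ^ j)
          = (∑ j ∈ Finset.range m, y ^ 2 ^ (j + 1)) + y ^ 2 ^ 0 :=
        Finset.sum_range_succ' _ _
      have h3 : (∑ j ∈ Finset.range (m + 1), y ^ 2 ^ j) = S y + y ^ 2 ^ m :=
        Finset.sum_range_succ _ _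
      have h4 : (S y * S y) + y = S y + y := by
        rw [h1]
        have := h2.symm.trans h3
        rw [pow_zero, pow_one] at this
        rw [this, hy]
      exact add_right_cancel h4
    have : S y * (S y - 1) = 0 := by rw [mul_sub, mul_one, hsq, sub_self]
    rcases mul_eq_zero.mp this with h | h
    · exact Or.inl h
    · exact Or.inr (sub_eq_zero.mp h)
  -- K = insert 0 V
  have hKmem : ∀ y : F, y ^ 2 ^ m = y ↔ (y = 0 ∨ y ^ (2 ^ m - 1) = 1) := by
    intro y
    constructor
    · intro hy
      by_cases h0 : y = 0
      · exact Or.inl h0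
      · right
        have h1 : y ^ (2 ^ m - 1) * y = 1 * y := by
          rw [one_mul, ← pow_succ]
          have h2 : 2 ^ m - 1 + 1 = 2 ^ m := by omega
          rw [h2, hy]
        exact mul_right_cancel₀ h0 h1
    · rintro (rfl | h1)
      · exact zero_pow (by positivity)
      · have h2 : 2 ^ m = (2 ^ m - 1) + 1 := by omega
        rw [h2, pow_add, h1, one_mul, pow_one]
  have h0V : (0 : F) ∉ V := by
    simp only [hV, Finset.mem_filter, Finset.mem_univ, true_and]
    rw [zero_pow (by omega : 2 ^ m - 1 ≠ 0)]
    exact fun h => zero_ne_one h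
  have hKV : (Finset.univ.filter fun y : F => y ^ 2 ^ m = y) = insert (0:F) V := by
    ext y
    simp only [Finset.mem_filter, Finset.mem_univ, true_and, Finset.mem_insert, hV, hKmem y]
  have hKcard : (Finset.univ.filter fun y : F => y ^ 2 ^ m = y).card = 2 ^ m := by
    rw [hKV, Finset.card_insert_of_notMem h0V, hVcard]
    omega
  -- the sets A and B
  set A : Finset F := Finset.univ.filter fun y : F => y ^ 2 ^ m = y ∧ S y = 0 with hA
  set B : Finset F := Finset.univ.filter fun y : F => y ^ 2 ^ m = y ∧ S y = 1 with hB
  have h1AB : A = (Finset.univ.filter fun y : F => y ^ 2 ^ m = y).filter fun y => S y = 0 := by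
    rw [Finset.filter_filter]
  have h2AB : B = (Finset.univ.filter fun y : F => y ^ 2 ^ m = y).filter
      fun y => ¬ (S y = 0) := by
    rw [Finset.filter_filter]
    ext y
    simp only [hB, Finset.mem_filter, Finset.mem_univ, true_and]
    constructor
    · rintro ⟨hy, hs⟩
      exact ⟨hy, by rw [hs]; exact one_ne_zero⟩
    · rintro ⟨hy, hs⟩
      rcases hS01 y hy with h | h
      · exact absurd h hs
      · exact ⟨hy, h⟩
  have hABsum : A.card + B.card = 2 ^ m := by
    rw [h1AB, h2AB, Finset.card_filter_add_card_filter_not, hKcard]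
  -- polynomial bound on A
  have hAle : A.card ≤ 2 ^ (m - 1) := by
    set P : Polynomial F := ∑ j ∈ Finset.range m, Polynomial.X ^ 2 ^ j with hP
    have hPcoeff : P.coeff (2 ^ (m - 1)) = 1 := by
      rw [hP, Polynomial.finset_sum_coeff]
      have hterm : ∀ j ∈ Finset.range m,
          (Polynomial.X ^ 2 ^ j : Polynomial F).coeff (2 ^ (m - 1))
          = if j = m - 1 then 1 else 0 := by
        intro j _
        simp only [Polynomial.coeff_X_pow]
        by_cases h : j = m - 1
        · simp [h]
        · rw [if_neg, if_neg h]
          intro hcon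
          exact h (Nat.pow_right_injective (le_refl 2) hcon).symm
      rw [Finset.sum_congr rfl hterm,
        Finset.sum_ite_eq' (Finset.range m) (m - 1) (fun _ => (1 : F))]
      rw [if_pos (Finset.mem_range.mpr (by omega))]
    have hPne : P ≠ 0 := by
      intro h
      rw [h, Polynomial.coeff_zero] at hPcoeff
      exact zero_ne_one hPcoeff
    have hdeg : P.natDegree ≤ 2 ^ (m - 1) := by
      apply Polynomial.natDegree_sum_le_of_forall_le
      intro j hj
      rw [Polynomial.natDegree_X_pow]
      exact Nat.pow_le_pow_right (by norm_num) (by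
        have := Finset.mem_range.mp hj
        omega)
    have hsub : A ⊆ P.roots.toFinset := by
      intro y hy
      simp only [hA, Finset.mem_filter, Finset.mem_univ, true_and] at hy
      rw [Multiset.mem_toFinset, Polynomial.mem_roots hPne]
      rw [Polynomial.IsRoot, hP, Polynomial.eval_finset_sum]
      simpa using hy.2
    calc A.card ≤ P.roots.toFinset.card := Finset.card_le_card hsub
    _ ≤ Multiset.card P.roots := Multiset.toFinset_card_le _
    _ ≤ P.natDegree := Polynomial.card_roots' P
    _ ≤ 2 ^ (m - 1) := hdeg
  -- B is nonempty
  have hBne : B.Nonempty := by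
    rw [← Finset.card_pos]
    by_contra h
    push_neg at h
    have hlt : 2 ^ (m - 1) < 2 ^ m := Nat.pow_lt_pow_right (by norm_num) (by omega)
    omega
  obtain ⟨y₀, hy₀⟩ := hBne
  have hy₀' := Finset.mem_filter.mp hy₀
  have hABeq : A.card = B.card := by
    apply Finset.card_bij' (fun y _ => y + y₀) (fun y _ => y + y₀)
    · intro a ha
      simp only [hA, hB, Finset.mem_filter, Finset.mem_univ, true_and] at ha ⊢
      refine ⟨?_, ?_⟩
      · rw [add_pow_char_pow a y₀ 2 m, ha.1, hy₀'.2.1]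
      · rw [hSadd, ha.2, hy₀'.2.2, zero_add]
    · intro b hb
      simp only [hA, hB, Finset.mem_filter, Finset.mem_univ, true_and] at hb ⊢
      refine ⟨?_, ?_⟩
      · rw [add_pow_char_pow b y₀ 2 m, hb.1, hy₀'.2.1]
      · rw [hSadd, hb.2, hy₀'.2.2]
        exact CharTwo.add_self_eq_zero 1
    · intro a _
      rw [add_assoc, CharTwo.add_self_eq_zero, add_zero]
    · intro b _
      rw [add_assoc, CharTwo.add_self_eq_zero, add_zero]
  -- sum over K
  have hKsum : ∑ y ∈ (Finset.univ.filter fun y : F => y ^ 2 ^ m = y),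
      (if S y = 0 then (1:ℤ) else -1) = 0 := by
    rw [Finset.sum_ite, Finset.sum_const, Finset.sum_const, ← h1AB, ← h2AB, hABeq]
    simp [nsmul_eq_mul]
  have hVsum : ∑ v ∈ V, (if S v = 0 then (1:ℤ) else -1) = -1 := by
    rw [hKV, Finset.sum_insert h0V, hS0, if_pos rfl] at hKsum
    linarith
  -- gcd facts
  have hfact : 2 ^ n - 1 = (2 ^ m + 1) * (2 ^ m - 1) := by
    rw [← hcard]; exact hcardm1
  have hEgcd : Nat.gcd e (2 ^ m - 1) = 1 := by
    have h1 : Nat.gcd e (2 ^ m - 1) ∣ d₁ := by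
      rw [hd₁]
      exact dvd_add (Dvd.dvd.mul_left (Nat.gcd_dvd_right _ _) _) (Nat.gcd_dvd_left _ _)
    have h2 : Nat.gcd e (2 ^ m - 1) ∣ 2 ^ n - 1 :=
      (Nat.gcd_dvd_right _ _).trans ⟨2 ^ m + 1, by rw [hfact]; ring⟩
    have h3 := Nat.dvd_gcd h1 h2
    rw [hgcd] at h3
    exact Nat.dvd_one.mp h3
  have hoddq : (2 ^ m - 1) % 2 = 1 := by
    have : 2 ∣ 2 ^ m := dvd_pow_self 2 hm.ne'
    omega
  have hUVgcd : Nat.gcd (2 ^ m + 1) (2 ^ m - 1) = 1 := by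
    have hg1 := Nat.gcd_dvd_left (2 ^ m + 1) (2 ^ m - 1)
    have hg2 := Nat.gcd_dvd_right (2 ^ m + 1) (2 ^ m - 1)
    have hg3 : Nat.gcd (2 ^ m + 1) (2 ^ m - 1) ∣ 2 := by
      have hd2 := Nat.dvd_sub hg1 hg2
      have heq : 2 ^ m + 1 - (2 ^ m - 1) = 2 := by omega
      rwa [heq] at hd2
    rcases (Nat.dvd_prime Nat.prime_two).mp hg3 with h | h
    · exact h
    · exfalso
      rw [h] at hg2
      omega
  -- order argument
  have hord : ∀ u : F, ∀ a b : ℕ, u ^ a = 1 → u ^ b = 1 → Nat.gcd a b = 1 → u = 1 := by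
    intro u a b ha hb hab
    have h1 : orderOf u ∣ a := orderOf_dvd_of_pow_eq_one ha
    have h2 : orderOf u ∣ b := orderOf_dvd_of_pow_eq_one hb
    have h3 := Nat.dvd_gcd h1 h2
    rw [hab] at h3
    exact orderOf_eq_one_iff.mp (Nat.dvd_one.mp h3)
  -- injectivity of v ↦ v^e on V
  have hVne : ∀ v ∈ V, v ≠ (0 : F) := by
    intro v hv h
    rw [h] at hv
    exact h0V hv
  have hVinj : ∀ v₁ ∈ V, ∀ v₂ ∈ V, v₁ ^ e = v₂ ^ e → v₁ = v₂ := by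
    intro v₁ h1 v₂ h2 heq
    have hne := hVne v₂ h2
    simp only [hV, Finset.mem_filter, Finset.mem_univ, true_and] at h1 h2
    have hu1 : (v₁ * v₂⁻¹) ^ e = 1 := by
      rw [mul_pow, inv_pow, heq, mul_inv_cancel₀ (pow_ne_zero _ hne)]
    have hu2 : (v₁ * v₂⁻¹) ^ (2 ^ m - 1) = 1 := by
      rw [mul_pow, inv_pow, h1, h2, inv_one, mul_one]
    exact (mul_inv_eq_one₀ hne).mp (hord _ _ _ hu1 hu2 hEgcd)
  -- injectivity of multiplication on U ×ˢ V
  have hUne : ∀ lam ∈ U, lam ≠ (0 : F) := by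
    intro lam hl h
    simp only [hU, Finset.mem_filter, Finset.mem_univ, true_and] at hl
    rw [h, zero_pow (by omega : 2 ^ m + 1 ≠ 0)] at hl
    exact zero_ne_one hl
  have hmulinj : ∀ p₁ ∈ U ×ˢ V, ∀ p₂ ∈ U ×ˢ V, p₁.1 * p₁.2 = p₂.1 * p₂.2 → p₁ = p₂ := by
    intro p₁ hp₁ p₂ hp₂ heq
    rw [Finset.mem_product] at hp₁ hp₂
    have hl₁0 := hUne _ hp₁.1
    have hl₂0 := hUne _ hp₂.1
    have hv₁0 := hVne _ hp₁.2
    have hv₂0 := hVne _ hp₂.2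
    have hl₁ := (Finset.mem_filter.mp hp₁.1).2
    have hl₂ := (Finset.mem_filter.mp hp₂.1).2
    have hv₁ := (Finset.mem_filter.mp hp₁.2).2
    have hv₂ := (Finset.mem_filter.mp hp₂.2).2
    have key : p₁.2 * p₂.2⁻¹ = p₁.1⁻¹ * p₂.1 := by
      field_simp
      linear_combination heq
    have hu1 : (p₁.2 * p₂.2⁻¹) ^ (2 ^ m - 1) = 1 := by
      rw [mul_pow, inv_pow, hv₁, hv₂, inv_one, mul_one]
    have hu2 : (p₁.2 * p₂.2⁻¹) ^ (2 ^ m + 1) = 1 := by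
      rw [key, mul_pow, inv_pow, hl₁, hl₂, inv_one, one_mul]
    have hveq : p₁.2 = p₂.2 :=
      (mul_inv_eq_one₀ hv₂0).mp (hord _ _ _ hu2 hu1 hUVgcd)
    have hleq : p₁.1 = p₂.1 := by
      rw [hveq] at heq
      exact mul_right_cancel₀ hv₂0 heq
    exact Prod.ext hleq hveq
  -- trace decomposition
  have hTr : ∀ z : F, (∑ j ∈ Finset.range n, z ^ 2 ^ j) = S (z + z ^ 2 ^ m) := by
    intro z
    have h1 : S (z + z ^ 2 ^ m) = S z + S (z ^ 2 ^ m) := hSadd _ _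
    have h2 : S (z ^ 2 ^ m) = ∑ j ∈ Finset.range m, z ^ 2 ^ (m + j) := by
      simp only [hS]
      refine Finset.sum_congr rfl fun j _ => ?_
      rw [← pow_mul, ← pow_add]
    have h3 : (∑ j ∈ Finset.range (m + m), z ^ 2 ^ j)
        = (∑ j ∈ Finset.range m, z ^ 2 ^ j) + ∑ j ∈ Finset.Ico m (m + m), z ^ 2 ^ j := by
      rw [Finset.range_eq_Ico, ← Finset.sum_Ico_consecutive _ (Nat.zero_le m)
        (Nat.le_add_right m m), ← Finset.range_eq_Ico]
    have h4 : (∑ j ∈ Finset.Ico m (m + m), z ^ 2 ^ j)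
        = ∑ j ∈ Finset.range m, z ^ 2 ^ (m + j) := by
      rw [Finset.sum_Ico_eq_sum_range]
      simp
    rw [hn, two_mul, h3, h4, h1, h2]
  -- the function c and its values
  set c : F → F := fun lam => f lam + (f lam) ^ 2 ^ m with hc
  have hcK : ∀ lam : F, (c lam) ^ 2 ^ m = c lam := by
    intro lam
    have h1 : ((f lam) ^ 2 ^ m) ^ 2 ^ m = f lam := by
      rw [← pow_mul, ← hqq, ← hcard, FiniteField.pow_card]
    show (f lam + (f lam) ^ 2 ^ m) ^ 2 ^ m = f lam + (f lam) ^ 2 ^ m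
    rw [add_pow_char_pow (f lam) ((f lam) ^ 2 ^ m) 2 m, h1, add_comm]
  have hf0 : f 0 = 0 := by
    show (0:F) ^ d₁ + ∑ i, w i * (0:F) ^ d i = 0
    rw [zero_pow (by omega : d₁ ≠ 0), Finset.sum_eq_zero fun i _ => by
      rw [zero_pow (by have := hd i; omega : d i ≠ 0), mul_zero], add_zero]
  have hc0 : c 0 = 0 := by
    show f 0 + (f 0) ^ 2 ^ m = 0
    rw [hf0, zero_pow (by positivity), add_zero]
  -- factorization of f on the torus decomposition
  have hpow_e : ∀ v : F, v ^ (2 ^ m - 1) = 1 → ∀ k : ℕ, v ^ (k * (2 ^ m - 1) + e) = v ^ e := by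
    intro v hv k
    rw [pow_add, mul_comm k, pow_mul, hv, one_pow, one_mul]
  have hfsplit : ∀ lam : F, ∀ v : F, v ^ (2 ^ m - 1) = 1 → f (lam * v) = v ^ e * f lam := by
    intro lam v hv
    have hv1 : v ^ d₁ = v ^ e := by rw [hd₁]; exact hpow_e v hv s₁
    have hvd : ∀ i, v ^ d i = v ^ e := fun i => by rw [hd i]; exact hpow_e v hv (s i)
    show (lam * v) ^ d₁ + ∑ i, w i * (lam * v) ^ d i
        = v ^ e * (lam ^ d₁ + ∑ i, w i * lam ^ d i)
    rw [mul_add, Finset.mul_sum]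
    congr 1
    · rw [mul_pow, hv1]; ring
    · refine Finset.sum_congr rfl fun i _ => ?_
      rw [mul_pow, hvd i]; ring
  have harg : ∀ lam : F, ∀ v : F, v ^ (2 ^ m - 1) = 1 →
      f (lam * v) + (f (lam * v)) ^ 2 ^ m = c lam * v ^ e := by
    intro lam v hv
    have h2me : (2:ℕ) ^ m = (2 ^ m - 1) + 1 := by omega
    have hvq : (v ^ e) ^ 2 ^ m = v ^ e := by
      rw [h2me, pow_add, pow_one, pow_right_comm, hv, one_pow, one_mul]
    rw [hfsplit lam v hv, mul_pow, hvq]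
    show v ^ e * f lam + v ^ e * (f lam) ^ 2 ^ m = (f lam + (f lam) ^ 2 ^ m) * v ^ e
    ring
  -- inner character sum
  have hinner : ∀ cc : F, cc ^ 2 ^ m = cc →
      (∑ v ∈ V, (if S (cc * v) = 0 then (1:ℤ) else -1))
        = if cc = 0 then ((2:ℤ) ^ m - 1) else -1 := by
    intro cc hcc
    by_cases h0 : cc = 0
    · subst h0
      rw [if_pos rfl]
      have hval : ∀ v ∈ V, (if S ((0:F) * v) = 0 then (1:ℤ) else -1) = 1 := by
        intro v _
        rw [zero_mul, hS0, if_pos rfl]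
      rw [Finset.sum_congr rfl hval, Finset.sum_const, hVcard, nsmul_eq_mul, mul_one,
        Nat.cast_sub (by omega : 1 ≤ 2 ^ m)]
      push_cast
      ring
    · rw [if_neg h0]
      have hccV : cc ∈ V := by
        simp only [hV, Finset.mem_filter, Finset.mem_univ, true_and]
        rcases (hKmem cc).mp hcc with h | h
        · exact absurd h h0
        · exact h
      have hccpow : cc ^ (2 ^ m - 1) = 1 := (Finset.mem_filter.mp hccV).2
      have hbij : ∑ v ∈ V, (if S (cc * v) = 0 then (1:ℤ) else -1)
          = ∑ v ∈ V, (if S v = 0 then (1:ℤ) else -1) := by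
        refine Finset.sum_nbij' (i := fun v => cc * v) (j := fun v => cc⁻¹ * v) ?_ ?_ ?_ ?_ ?_
        · intro a ha
          simp only [hV, Finset.mem_filter, Finset.mem_univ, true_and] at ha ⊢
          rw [mul_pow, hccpow, ha, one_mul]
        · intro a ha
          simp only [hV, Finset.mem_filter, Finset.mem_univ, true_and] at ha ⊢
          rw [mul_pow, inv_pow, hccpow, inv_one, ha, one_mul]
        · intro a _
          show cc⁻¹ * (cc * a) = a
          rw [← mul_assoc, inv_mul_cancel₀ h0, one_mul]
        · intro a _
          show cc * (cc⁻¹ * a) = a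
          rw [← mul_assoc, mul_inv_cancel₀ h0, one_mul]
        · intro a _
          rfl
      rw [hbij, hVsum]
  -- image of e-th power map on V is V
  have himg : Finset.image (fun v : F => v ^ e) V = V := by
    apply Finset.eq_of_subset_of_card_le
    · intro x hx
      obtain ⟨v, hv, rfl⟩ := Finset.mem_image.mp hx
      simp only [hV, Finset.mem_filter, Finset.mem_univ, true_and] at hv ⊢
      rw [← pow_mul, mul_comm, pow_mul, hv, one_pow]
    · rw [Finset.card_image_of_injOn fun a ha b hb hab => hVinj a ha b hb hab]
  have hinner' : ∀ lam : F, (∑ v ∈ V, (if S (c lam * v ^ e) = 0 then (1:ℤ) else -1))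
      = if c lam = 0 then ((2:ℤ) ^ m - 1) else -1 := by
    intro lam
    have h1 : (∑ x ∈ Finset.image (fun v : F => v ^ e) V,
          (if S (c lam * x) = 0 then (1:ℤ) else -1))
        = ∑ v ∈ V, (if S (c lam * v ^ e) = 0 then (1:ℤ) else -1) :=
      Finset.sum_image fun a ha b hb hab => hVinj a ha b hb hab
    rw [← h1, himg]
    exact hinner (c lam) (hcK lam)
  -- image of multiplication on U ×ˢ V
  have himgUV : Finset.image (fun p : F × F => p.1 * p.2) (U ×ˢ V)
      = Finset.univ.erase (0 : F) := by
    apply Finset.eq_of_subset_of_card_le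
    · intro x hx
      obtain ⟨p, hp, rfl⟩ := Finset.mem_image.mp hx
      rw [Finset.mem_product] at hp
      exact Finset.mem_erase.mpr
        ⟨mul_ne_zero (hUne _ hp.1) (hVne _ hp.2), Finset.mem_univ _⟩
    · rw [Finset.card_erase_of_mem (Finset.mem_univ _), Finset.card_univ,
        Finset.card_image_of_injOn fun a ha b hb hab => hmulinj a ha b hb hab,
        Finset.card_product, hUcard, hVcard, hcard, hqq]
      have heq := hcardm1
      rw [hcard, hqq] at heq
      exact le_of_eq heq
  -- main computation
  have hcx : ∀ x : F, f x + f x ^ 2 ^ m = c x := fun x => rfl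
  have hgoalL : ∑ x : F, (if (∑ j ∈ Finset.range n, (f x) ^ 2 ^ j) = 0 then (1:ℤ) else -1)
      = 1 + ∑ lam ∈ U, (if c lam = 0 then ((2:ℤ) ^ m - 1) else -1) := by
    simp only [hTr, hcx]
    rw [← Finset.sum_erase_add _ _ (Finset.mem_univ (0:F)), hc0, hS0, if_pos rfl, add_comm]
    congr 1
    rw [← himgUV, Finset.sum_image fun a ha b hb hab => hmulinj a ha b hb hab,
      Finset.sum_product]
    refine Finset.sum_congr rfl fun lam hlam => ?_
    have h1 : ∀ v ∈ V, (if S (c (lam * v)) = 0 then (1:ℤ) else -1)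
        = (if S (c lam * v ^ e) = 0 then (1:ℤ) else -1) := by
      intro v hv
      have hv' : v ^ (2 ^ m - 1) = 1 := (Finset.mem_filter.mp hv).2
      have : c (lam * v) = c lam * v ^ e := harg lam v hv'
      rw [this]
    rw [Finset.sum_congr rfl h1, hinner' lam]
  -- final counting
  set N : ℕ := (U.filter fun lam => c lam = 0).card with hN
  have hstmtN : (Finset.univ.filter fun lam : F => lam ^ (2 ^ m + 1) = 1 ∧ c lam = 0)
      = U.filter fun lam => c lam = 0 := by
    rw [hU, Finset.filter_filter]
  have hNle : N ≤ 2 ^ m + 1 := by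
    rw [hN, ← hUcard]
    exact Finset.card_filter_le _ _
  have hsplit : ∑ lam ∈ U, (if c lam = 0 then ((2:ℤ) ^ m - 1) else -1)
      = (N : ℤ) * ((2:ℤ) ^ m - 1) + ((2 ^ m + 1 - N : ℕ) : ℤ) * (-1) := by
    rw [Finset.sum_ite, Finset.sum_const, Finset.sum_const]
    have hNc : (U.filter fun lam => ¬ c lam = 0).card = 2 ^ m + 1 - N := by
      have hh := Finset.card_filter_add_card_filter_not
        (s := U) (p := fun lam => c lam = 0)
      rw [hUcard] at hh
      omega
    rw [hNc, nsmul_eq_mul, nsmul_eq_mul]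
  show _ = ((Finset.univ.filter fun lam : F => lam ^ (2 ^ m + 1) = 1 ∧ c lam = 0).card - 1 : ℤ)
      * 2 ^ m
  rw [hgoalL, hsplit, hstmtN, ← hN]
  push_cast [hNle]
  ring
end

section
/- Let n = 2m with m odd, d_1 = s(2^m - 1) + e, d_2 = (s - l)(2^m - 1) + e with e = 2^{k_3} + 1, s = 2^{k_3 - 1} - 2^{k_2 - 1} + 1, l = 2^{k_1} + 1, where k_1, k_2 are odd, k_2 ≥ 1, k_3 ≥ 1, and gcd(k_1, m) = 1. Then gcd(d_1, 2^n - 1) = 1, gcd(l, 2^m + 1) = 3, and gcd(e + l - 2s, 2^m + 1) = 1. -/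
/-- If `d` divides `2^a - 1` and `2^b - 1` in `ℤ`, it divides `2^gcd(a,b) - 1`. -/
lemma key_gcd_dvd (d : ℤ) (a b : ℕ) (h1 : d ∣ 2 ^ a - 1) (h2 : d ∣ 2 ^ b - 1) :
    d ∣ 2 ^ (Nat.gcd a b) - 1 := by
  rcases Nat.eq_zero_or_pos a with rfl | ha
  · simpa using h2
  rcases Nat.eq_zero_or_pos b with rfl | hb
  · simpa using h1
  set n := d.natAbs with hn
  have hn0 : n ≠ 0 := by
    rintro h
    have hd0 : d = 0 := Int.natAbs_eq_zero.mp h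
    subst hd0
    have h1' : (2:ℤ) ^ a - 1 = 0 := (zero_dvd_iff.mp h1)
    have h2a : (2:ℤ) ^ a = 2 * 2 ^ (a - 1) := by
      rw [← pow_succ', Nat.sub_add_cancel ha]
    have hpos : (0:ℤ) < 2 ^ (a - 1) := by positivity
    omega
  haveI : NeZero n := ⟨hn0⟩
  have hd : ∀ x : ℤ, d ∣ x ↔ ((x : ZMod n) = 0) := fun x => by
    rw [ZMod.intCast_zmod_eq_zero_iff_dvd, hn, Int.natAbs_dvd]
  have e1 : (2 : ZMod n) ^ a = 1 := by
    have := (hd _).mp h1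
    push_cast at this
    linear_combination this
  have e2 : (2 : ZMod n) ^ b = 1 := by
    have := (hd _).mp h2
    push_cast at this
    linear_combination this
  have ho : orderOf (2 : ZMod n) ∣ Nat.gcd a b :=
    Nat.dvd_gcd (orderOf_dvd_of_pow_eq_one e1) (orderOf_dvd_of_pow_eq_one e2)
  have e3 : (2 : ZMod n) ^ Nat.gcd a b = 1 := orderOf_dvd_iff_pow_eq_one.mp ho
  rw [hd]
  push_cast
  rw [e3, sub_self]

lemma pow_sub_one_dvd_pow_sub_one {g a : ℕ} (h : g ∣ a) : ((2:ℤ) ^ g - 1) ∣ 2 ^ a - 1 := by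
  obtain ⟨c, rfl⟩ := h
  have := sub_dvd_pow_sub_pow ((2:ℤ) ^ g) 1 c
  simpa [← pow_mul] using this

lemma pow_add_one_dvd (k : ℕ) : ((2:ℤ) ^ k + 1) ∣ 2 ^ (2 * k) - 1 :=
  ⟨2 ^ k - 1, by rw [two_mul, pow_add]; ring⟩

lemma three_dvd_pow_add_one {k : ℕ} (hk : Odd k) : (3:ℤ) ∣ 2 ^ k + 1 := by
  obtain ⟨j, rfl⟩ := hk
  have h4 : (4:ℤ) ^ j ≡ 1 ^ j [ZMOD 3] := Int.ModEq.pow j (by decide)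
  have : (2:ℤ) ^ (2 * j + 1) + 1 = 2 * 4 ^ j + 1 := by
    have h4e : ((2:ℤ) ^ 2) = 4 := by norm_num
    rw [pow_add, pow_mul, h4e, pow_one]; ring
  rw [this]
  have := (h4.mul_left 2).add_right 1
  simpa using (Int.modEq_iff_dvd.mp this.symm)

lemma eq_one_of_dvd_two_of_dvd_odd (d : ℕ) (h2 : (d:ℤ) ∣ 2) {y : ℤ}
    (hdy : (d:ℤ) ∣ y) (hy : ¬ (2:ℤ) ∣ y) : d = 1 := by
  have h2' : d ∣ 2 := by exact_mod_cast h2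
  rcases (Nat.dvd_prime Nat.prime_two).mp h2' with h | h
  · exact h
  · subst h
    exact absurd (by exact_mod_cast hdy : (2:ℤ) ∣ y) hy

lemma not_two_dvd_pow_add_one {m : ℕ} (hm : 0 < m) : ¬ (2:ℤ) ∣ 2 ^ m + 1 := by
  have h2a : (2:ℤ) ^ m = 2 * 2 ^ (m - 1) := by rw [← pow_succ', Nat.sub_add_cancel hm]
  rw [h2a]
  omega

lemma not_two_dvd_pow_sub_one {m : ℕ} (hm : 0 < m) : ¬ (2:ℤ) ∣ 2 ^ m - 1 := by
  have h2a : (2:ℤ) ^ m = 2 * 2 ^ (m - 1) := by rw [← pow_succ', Nat.sub_add_cancel hm]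
  rw [h2a]
  omega

/-- Main workhorse: if the gcd divides `2^j - 1` and `2^j + 1` and an odd number, it is 1. -/
lemma gcd_one_of_dvds {x y : ℤ} (j : ℕ) (hxj : (Int.gcd x y : ℤ) ∣ 2 ^ j - 1)
    (hyj : (Int.gcd x y : ℤ) ∣ 2 ^ j + 1) (hodd : ¬ (2:ℤ) ∣ y) : Int.gcd x y = 1 := by
  have h2 : (Int.gcd x y : ℤ) ∣ 2 := by
    have := dvd_sub hyj hxj
    simpa using this
  exact eq_one_of_dvd_two_of_dvd_odd _ h2 (Int.gcd_dvd_right _ _) hodd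

lemma coprime_two_of_odd {m : ℕ} (hm : Odd m) : Nat.Coprime 2 m :=
  (Nat.Prime.coprime_iff_not_dvd Nat.prime_two).mpr (by
    rw [Nat.odd_iff] at hm; omega)

/-- `gcd(2^{k}+1, 2^m - 1) = 1` for `m` odd. -/
lemma gcd_pow_add_one_pow_sub_one {k m : ℕ} (hm : Odd m) (hm0 : 0 < m) (_hk : 0 < k) :
    Int.gcd (2 ^ k + 1) (2 ^ m - 1) = 1 := by
  set d : ℤ := (Int.gcd (2 ^ k + 1) (2 ^ m - 1) : ℤ) with hdd
  have h1 : d ∣ 2 ^ (2 * k) - 1 := (Int.gcd_dvd_left _ _).trans (pow_add_one_dvd k)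
  have h2 : d ∣ 2 ^ m - 1 := (Int.gcd_dvd_right _ _)
  have h3 : d ∣ 2 ^ (Nat.gcd (2 * k) m) - 1 := key_gcd_dvd d _ _ h1 h2
  rw [(coprime_two_of_odd hm).gcd_mul_left_cancel k] at h3
  have h4 : d ∣ 2 ^ k - 1 := h3.trans (pow_sub_one_dvd_pow_sub_one (Nat.gcd_dvd_left k m))
  exact gcd_one_of_dvds k h4 (Int.gcd_dvd_left _ _) (not_two_dvd_pow_sub_one hm0)

/-- `gcd(2^{k}-1, 2^m + 1) = 1` for `k` odd. -/
lemma gcd_pow_sub_one_pow_add_one {k m : ℕ} (hk : Odd k) (hm0 : 0 < m) :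
    Int.gcd (2 ^ k - 1) (2 ^ m + 1) = 1 := by
  set d : ℤ := (Int.gcd (2 ^ k - 1) (2 ^ m + 1) : ℤ) with hdd
  have h1 : d ∣ 2 ^ k - 1 := (Int.gcd_dvd_left _ _)
  have h2 : d ∣ 2 ^ (2 * m) - 1 := (Int.gcd_dvd_right _ _).trans (pow_add_one_dvd m)
  have h3 : d ∣ 2 ^ (Nat.gcd k (2 * m)) - 1 := key_gcd_dvd d _ _ h1 h2
  rw [(coprime_two_of_odd hk).gcd_mul_left_cancel_right m] at h3
  have h4 : d ∣ 2 ^ m - 1 := h3.trans (pow_sub_one_dvd_pow_sub_one (Nat.gcd_dvd_right k m))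
  have h5 : d ∣ 2 := by
    have := dvd_sub (Int.gcd_dvd_right _ _) h4
    simpa using this
  exact eq_one_of_dvd_two_of_dvd_odd _ h5 (Int.gcd_dvd_right _ _) (not_two_dvd_pow_add_one hm0)

/-- `gcd(2^j+1, 2^m+1) = 1` for `j` even, `m` odd. -/
lemma gcd_even_add_one {j m : ℕ} (hj : Even j) (hm : Odd m) (hm0 : 0 < m) :
    Int.gcd (2 ^ j + 1) (2 ^ m + 1) = 1 := by
  set d : ℤ := (Int.gcd (2 ^ j + 1) (2 ^ m + 1) : ℤ) with hdd
  have h1 : d ∣ 2 ^ (2 * j) - 1 := (Int.gcd_dvd_left _ _).trans (pow_add_one_dvd j)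
  have h2 : d ∣ 2 ^ (2 * m) - 1 := (Int.gcd_dvd_right _ _).trans (pow_add_one_dvd m)
  have h3 : d ∣ 2 ^ (Nat.gcd (2 * j) (2 * m)) - 1 := key_gcd_dvd d _ _ h1 h2
  rw [Nat.gcd_mul_left 2 j m] at h3
  set g := Nat.gcd j m with hg
  have hgj : 2 * g ∣ j := by
    obtain ⟨c, hc⟩ := Nat.gcd_dvd_left j m
    have hgodd : Odd g := by
      have hgm : g ∣ m := Nat.gcd_dvd_right j m
      rcases Nat.even_or_odd g with he | ho
      · exfalso
        have h2m : 2 ∣ m := dvd_trans he.two_dvd hgm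
        rw [Nat.odd_iff] at hm
        omega
      · exact ho
    have hcev : Even c := by
      rcases Nat.even_or_odd c with he | ho
      · exact he
      · exact absurd (by rw [hc]; exact hgodd.mul ho : Odd j)
          (Nat.not_odd_iff_even.mpr hj)
    obtain ⟨u, hu⟩ := hcev
    exact ⟨u, by rw [hc, hu]; ring⟩
  have h4 : d ∣ 2 ^ j - 1 := h3.trans (pow_sub_one_dvd_pow_sub_one hgj)
  exact gcd_one_of_dvds j h4 (Int.gcd_dvd_left _ _) (not_two_dvd_pow_add_one hm0)

lemma isCoprime_pow_two_add_one {m : ℕ} (hm0 : 0 < m) : IsCoprime (2:ℤ) (2 ^ m + 1) := by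
  refine ⟨-(2 ^ (m - 1)), 1, ?_⟩
  have h2a : (2:ℤ) ^ m = 2 ^ (m - 1) * 2 := by rw [← pow_succ, Nat.sub_add_cancel hm0]
  rw [h2a]; ring

/-- `gcd(2^{k₁} + 2^{k₂}, 2^m+1) = 1` for `k₁, k₂` odd, `m` odd. -/
lemma gcd_sum_pows {k₁ k₂ m : ℕ} (hk₁ : Odd k₁) (hk₂ : Odd k₂) (hm : Odd m) (hm0 : 0 < m) :
    Int.gcd (2 ^ k₁ + 2 ^ k₂) (2 ^ m + 1) = 1 := by
  rw [← Int.isCoprime_iff_gcd_eq_one]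
  -- wlog via symmetry
  suffices h : ∀ a b : ℕ, Odd a → Odd b → a ≤ b →
      IsCoprime ((2:ℤ) ^ a + 2 ^ b) (2 ^ m + 1) by
    rcases le_total k₁ k₂ with hle | hle
    · exact h k₁ k₂ hk₁ hk₂ hle
    · have := h k₂ k₁ hk₂ hk₁ hle
      rwa [add_comm] at this
  intro a b ha hb hab
  have hsplit : (2:ℤ) ^ a + 2 ^ b = 2 ^ a * (2 ^ (b - a) + 1) := by
    rw [mul_add, mul_one, ← pow_add, Nat.add_sub_cancel' hab, add_comm]
  rw [hsplit]
  apply IsCoprime.mul_left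
  · exact (isCoprime_pow_two_add_one hm0).pow_left
  · rw [Int.isCoprime_iff_gcd_eq_one]
    exact gcd_even_add_one (Nat.Odd.sub_odd hb ha) hm hm0

/-- Arithmetic conditions of Proposition 1, case (1): with `m` odd, `e = 2^{k₃}+1`,
`s = 2^{k₃-1} - 2^{k₂-1} + 1`, `l = 2^{k₁}+1` (`k₁, k₂` odd, `gcd(k₁, m) = 1`), and
`d₁ = s(2^m-1)+e`, one has `gcd(d₁, 2^{2m}-1) = 1`, `gcd(l, 2^m+1) = 3` and
`gcd(e+l-2s, 2^m+1) = 1` (computed in `ℤ` since `s` may be negative). -/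
theorem prop1_case1_conditions (n m k₁ k₂ k₃ : ℕ)
    (hm : Odd m) (hm0 : 0 < m) (hn : n = 2 * m)
    (hk₁ : Odd k₁) (hk₂ : Odd k₂) (hk₂0 : 1 ≤ k₂) (hk₃0 : 1 ≤ k₃)
    (hk₁m : Nat.gcd k₁ m = 1)
    (e s l : ℤ) (he : e = 2 ^ k₃ + 1)
    (hs : s = 2 ^ (k₃ - 1) - 2 ^ (k₂ - 1) + 1) (hl : l = 2 ^ k₁ + 1)
    (d₁ : ℤ) (hd₁ : d₁ = s * (2 ^ m - 1) + e) :
    Int.gcd d₁ (2 ^ n - 1) = 1 ∧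
    Int.gcd l (2 ^ m + 1) = 3 ∧
    Int.gcd (e + l - 2 * s) (2 ^ m + 1) = 1 := by
  have hpow3 : (2:ℤ) ^ (k₃ - 1) * 2 = 2 ^ k₃ := by rw [← pow_succ, Nat.sub_add_cancel hk₃0]
  have hpow2 : (2:ℤ) ^ (k₂ - 1) * 2 = 2 ^ k₂ := by rw [← pow_succ, Nat.sub_add_cancel hk₂0]
  have hel2s : e + l - 2 * s = 2 ^ k₁ + 2 ^ k₂ := by
    rw [he, hl, hs]; linear_combination (-1 : ℤ) * hpow3 + hpow2
  have he2s : e - 2 * s = 2 ^ k₂ - 1 := by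
    rw [he, hs]; linear_combination (-1 : ℤ) * hpow3 + hpow2
  refine ⟨?_, ?_, ?_⟩
  · -- gcd(d₁, 2^n - 1) = 1
    rw [← Int.isCoprime_iff_gcd_eq_one]
    have hsplit : (2:ℤ) ^ n - 1 = (2 ^ m - 1) * (2 ^ m + 1) := by
      rw [hn, two_mul, pow_add]; ring
    rw [hsplit]
    apply IsCoprime.mul_right
    · -- coprime to 2^m - 1
      have hcop : IsCoprime e ((2:ℤ) ^ m - 1) := by
        rw [Int.isCoprime_iff_gcd_eq_one, he]
        exact gcd_pow_add_one_pow_sub_one hm hm0 hk₃0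
      have := hcop.add_mul_left_left s
      have heq : d₁ = e + (2 ^ m - 1) * s := by rw [hd₁]; ring
      rwa [← heq] at this
    · -- coprime to 2^m + 1
      have hcop : IsCoprime ((2:ℤ) ^ k₂ - 1) ((2:ℤ) ^ m + 1) := by
        rw [Int.isCoprime_iff_gcd_eq_one]
        exact gcd_pow_sub_one_pow_add_one hk₂ hm0
      have := hcop.add_mul_left_left s
      have heq : d₁ = (2 ^ k₂ - 1) + (2 ^ m + 1) * s := by
        rw [hd₁]; linear_combination he2s
      rwa [← heq] at this
  · -- gcd(l, 2^m + 1) = 3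
    have h3l : (3:ℤ) ∣ l := hl ▸ three_dvd_pow_add_one hk₁
    have h3N : (3:ℤ) ∣ 2 ^ m + 1 := three_dvd_pow_add_one hm
    have h3g : 3 ∣ Int.gcd l ((2:ℤ) ^ m + 1) := by
      have h := Int.dvd_gcd h3l h3N
      exact_mod_cast h
    have hg3 : Int.gcd l ((2:ℤ) ^ m + 1) ∣ 3 := by
      set d : ℤ := (Int.gcd l ((2:ℤ) ^ m + 1) : ℤ) with hdd
      have hdl : d ∣ (2:ℤ) ^ k₁ + 1 := by rw [hdd, ← hl]; exact (Int.gcd_dvd_left _ _)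
      have h1 : d ∣ 2 ^ (2 * k₁) - 1 := hdl.trans (pow_add_one_dvd k₁)
      have h2 : d ∣ 2 ^ (2 * m) - 1 := (Int.gcd_dvd_right _ _).trans (pow_add_one_dvd m)
      have h3 : d ∣ 2 ^ (Nat.gcd (2 * k₁) (2 * m)) - 1 := key_gcd_dvd d _ _ h1 h2
      rw [Nat.gcd_mul_left 2 k₁ m, hk₁m] at h3
      norm_num at h3
      rw [hdd] at h3
      exact_mod_cast h3
    exact Nat.dvd_antisymm hg3 h3g
  · -- gcd(e + l - 2s, 2^m + 1) = 1
    rw [hel2s]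
    exact gcd_sum_pows hk₁ hk₂ hm hm0
end
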